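/- arXiv:math/0609591 — 7 statements merged into one kernel-verified Lean document; each statement's English description precedes it below -/
import Mathlib

section
/- Let m ≥ 1 be an integer and let v : (0,∞) → S² be locally absolutely continuous with finite energy, i.e. π∫₀^∞(|v'(r)|² + (m²/r²)(v₁(r)²+v₂(r)²)) r dr < ∞, and boundary values v(0+) = −k̂ and v(r) → k̂ as r → ∞. Then π∫₀^∞(|v'(r)|² + (m²/r²)(v₁(r)²+v₂(r)²)) r dr = π∫₀^∞ |v'(r) − (m/r) v(r)×Rv(r)|² r dr + 4πm. -/
open MeasureTheory Set Real Filter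
open scoped ENNReal

noncomputable section

abbrev V3 := Fin 3 → ℝ
abbrev V2 := Fin 2 → ℝ

/-- cross product in ℝ³ -/
def cross3 (a b : V3) : V3 :=
  ![a 1 * b 2 - a 2 * b 1, a 2 * b 0 - a 0 * b 2, a 0 * b 1 - a 1 * b 0]

/-- dot product in ℝ³ -/
def dot3 (a b : V3) : ℝ := a 0 * b 0 + a 1 * b 1 + a 2 * b 2

/-- squared euclidean norm in ℝ³ -/
def nsq3 (a : V3) : ℝ := a 0 ^ 2 + a 1 ^ 2 + a 2 ^ 2

/-- the generator R of rotations about the x₃-axis -/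
def Rv (a : V3) : V3 := ![-a 1, a 0, 0]

/-- the rotation e^{αR} about the x₃-axis -/
def rotZ (α : ℝ) (a : V3) : V3 :=
  ![Real.cos α * a 0 - Real.sin α * a 1, Real.sin α * a 0 + Real.cos α * a 1, a 2]

def kHat : V3 := ![0, 0, 1]
def negkHat : V3 := ![0, 0, -1]
def jHat : V3 := ![0, 1, 0]

/-- first component of the harmonic map profile -/
def h1f (m : ℕ) (r : ℝ) : ℝ := 2 / (r ^ (m : ℤ) + r ^ (-(m : ℤ)))

/-- third component of the harmonic map profile -/
def h3f (m : ℕ) (r : ℝ) : ℝ := (r ^ (m : ℤ) - r ^ (-(m : ℤ))) / (r ^ (m : ℤ) + r ^ (-(m : ℤ)))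

/-- the harmonic map profile h -/
def hProf (m : ℕ) (r : ℝ) : V3 := ![h1f m r, 0, h3f m r]

/-- the r-derivative of the harmonic map profile -/
def dhProf (m : ℕ) (r : ℝ) : V3 :=
  ![-((m : ℝ) / r) * h1f m r * h3f m r, 0, ((m : ℝ) / r) * (h1f m r) ^ 2]

/-- profile of the harmonic map e^{(mθ+α)R} h(r/s) -/
def harmP (m : ℕ) (s α : ℝ) (r : ℝ) : V3 := rotZ α (hProf m (r / s))

/-- its r-derivative -/
def dharmP (m : ℕ) (s α : ℝ) (r : ℝ) : V3 := fun i => (1 / s) * rotZ α (dhProf m (r / s)) i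

/-- `v` is locally absolutely continuous on (0,∞), with a.e. derivative `dv`. -/
def LocAC (v dv : ℝ → V3) : Prop :=
  (∀ a b : ℝ, 0 < a → a ≤ b → ∀ i, IntervalIntegrable (fun r => dv r i) volume a b) ∧
  (∀ a b : ℝ, 0 < a → a ≤ b → ∀ i, v b i - v a i = ∫ r in a..b, dv r i)

/-- energy density (w.r.t. dr) of the m-equivariant map with profile (v,dv) -/
def eDen (m : ℕ) (v dv : ℝ → V3) (r : ℝ) : ℝ :=
  (nsq3 (dv r) + ((m : ℝ) ^ 2 / r ^ 2) * ((v r 0) ^ 2 + (v r 1) ^ 2)) * r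

/-- the energy E(u) = (1/2)∫|∇u|² of the m-equivariant map with profile (v,dv) -/
def energy (m : ℕ) (v dv : ℝ → V3) : ℝ := π * ∫ r in Ioi (0:ℝ), eDen m v dv r

/-- membership in the class Σ_m, expressed in terms of the profile (v,dv) -/
def InSigma (m : ℕ) (v dv : ℝ → V3) : Prop :=
  LocAC v dv ∧ (∀ r ∈ Ioi (0:ℝ), nsq3 (v r) = 1) ∧
  IntegrableOn (eDen m v dv) (Ioi (0:ℝ)) ∧
  Tendsto v (nhdsWithin 0 (Ioi 0)) (nhds negkHat) ∧
  Tendsto v atTop (nhds kHat)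

/-- squared Ḣ¹(ℝ²) distance between the m-equivariant maps with profiles (v,dv), (w,dw) -/
def dH1sq (m : ℕ) (v dv w dw : ℝ → V3) : ℝ :=
  2 * π * ∫ r in Ioi (0:ℝ),
    (nsq3 (fun i => dv r i - dw r i)
      + ((m : ℝ) ^ 2 / r ^ 2) * ((v r 0 - w r 0) ^ 2 + (v r 1 - w r 1) ^ 2)) * r

/-- Ḣ¹(ℝ²) distance -/
def dH1 (m : ℕ) (v dv w dw : ℝ → V3) : ℝ := Real.sqrt (dH1sq m v dv w dw)

/-- the polar angle of a point of ℝ² -/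
def angleOf (x : V2) : ℝ := Complex.arg ⟨x 0, x 1⟩

/-- the radius of a point of ℝ² -/
def radOf (x : V2) : ℝ := Real.sqrt ((x 0) ^ 2 + (x 1) ^ 2)

/-- the m-equivariant map u(r,θ) = e^{mθR} v(r) -/
def eqMap (m : ℕ) (v : ℝ → V3) (x : V2) : V3 := rotZ ((m : ℝ) * angleOf x) (v (radOf x))

/-- the spatial gradient ∂_j u of the m-equivariant map with profile (v,dv) -/
def eqGrad (m : ℕ) (v dv : ℝ → V3) (x : V2) (j : Fin 2) : V3 :=
  rotZ ((m : ℝ) * angleOf x) (fun i =>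
    (x j / radOf x) * dv (radOf x) i
      + ((m : ℝ) * (if j = 0 then -(x 1) else x 0) / radOf x ^ 2) * Rv (v (radOf x)) i)

/-- weak (distributional) form of the Schrödinger map equation ∂ₜu = u × Δu on the time
interval I, for the m-equivariant map with time-dependent profile (v,dv):
∫∫ { u·φ_t - Σ_j (u × ∂_j u)·∂_j φ } dx dt = 0 for all C¹ compactly supported φ. -/
def WeakSM (m : ℕ) (I : Set ℝ) (v dv : ℝ → ℝ → V3) : Prop :=
  ∀ φ : ℝ → V2 → V3,
    (∀ i, ContDiff ℝ 1 (fun q : ℝ × V2 => φ q.1 q.2 i)) →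
    (∀ i, HasCompactSupport (fun q : ℝ × V2 => φ q.1 q.2 i)) →
    (∀ t, t ∉ interior I → ∀ x, φ t x = 0) →
    (∫ t in I, ∫ x : V2,
      (dot3 (eqMap m (v t) x) (fun i => deriv (fun τ => φ τ x i) t)
        - ∑ j : Fin 2, dot3 (cross3 (eqMap m (v t) x) (eqGrad m (v t) (dv t) x j))
            (fun i => fderiv ℝ (fun y => φ t y i) x (Pi.single j 1)))) = 0

/-- continuity in t of the map t ↦ u(t) with respect to the Ḣ¹ distance, on I -/
def H1Cont (m : ℕ) (I : Set ℝ) (v dv : ℝ → ℝ → V3) : Prop :=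
  ∀ t₀ ∈ I, ∀ ε > (0:ℝ), ∃ η > (0:ℝ), ∀ t ∈ I, |t - t₀| < η →
    dH1 m (v t) (dv t) (v t₀) (dv t₀) < ε

/-- a weak solution of the Schrödinger map equation in the class C(I; Σ_m), with
initial profile v₀ -/
def SolClass (m : ℕ) (I : Set ℝ) (v dv : ℝ → ℝ → V3) (v₀ : ℝ → V3) : Prop :=
  (∀ r ∈ Ioi (0:ℝ), v 0 r = v₀ r) ∧ WeakSM m I v dv ∧
  (∀ t ∈ I, InSigma m (v t) (dv t)) ∧ H1Cont m I v dv

/-- the profile of Δu for the m-equivariant map u with profile (v,dv,ddv):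
Δu = e^{mθR}( v_rr + v_r/r + (m²/r²) R² v ) -/
def lapP (m : ℕ) (v dv ddv : ℝ → V3) (r : ℝ) : V3 := fun i =>
  ddv r i + dv r i / r + ((m : ℝ) ^ 2 / r ^ 2) * (![-(v r 0), -(v r 1), 0] : V3) i

/-- squared Ḣ² distance (via the Laplacian) -/
def dH2sq (m : ℕ) (v dv ddv w dw ddw : ℝ → V3) : ℝ :=
  2 * π * ∫ r in Ioi (0:ℝ), nsq3 (fun i => lapP m v dv ddv r i - lapP m w dw ddw r i) * r



/-- Lebesgue differentiation: a.e. derivative of an indefinite integral. -/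
lemma ftc_ae {f : ℝ → ℝ} (hf : Integrable f) (a : ℝ) :
    ∀ᵐ x, HasDerivAt (fun u => ∫ t in a..u, f t) (f x) x := by
  filter_upwards [IsUnifLocDoublingMeasure.ae_tendsto_average_norm_sub (μ := volume)
    hf.locallyIntegrable 1] with x hx
  rw [hasDerivAt_iff_tendsto_slope]
  have hδ : Tendsto (fun y : ℝ => |y - x|) (nhdsWithin x {x}ᶜ) (nhdsWithin 0 (Ioi 0)) := by
    apply tendsto_nhdsWithin_of_tendsto_nhds_of_eventually_within
    · have : Continuous fun y : ℝ => |y - x| := (continuous_id.sub continuous_const).abs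
      simpa using (this.tendsto x).mono_left nhdsWithin_le_nhds
    · filter_upwards [self_mem_nhdsWithin] with y hy
      simpa [sub_eq_zero] using hy
  have hav : Tendsto (fun y : ℝ => 2 * ⨍ t in Metric.closedBall x |y - x|, ‖f t - f x‖)
      (nhdsWithin x {x}ᶜ) (nhds 0) := by
    have := hx (fun _ => x) (fun y => |y - x|) hδ (by
      filter_upwards with y
      simp [Metric.mem_closedBall, abs_nonneg])
    simpa using (this.const_mul 2)
  have key : ∀ᶠ y in nhdsWithin x {x}ᶜ,
      ‖slope (fun u => ∫ t in a..u, f t) x y - f x‖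
        ≤ 2 * ⨍ t in Metric.closedBall x |y - x|, ‖f t - f x‖ := by
    filter_upwards [self_mem_nhdsWithin] with y hy
    have hyx : y ≠ x := hy
    have hd : (0:ℝ) < |y - x| := abs_pos.2 (sub_ne_zero.2 hyx)
    have hgg : (∫ t in a..y, f t) - (∫ t in a..x, f t) = ∫ t in x..y, f t := by
      rw [← intervalIntegral.integral_add_adjacent_intervals
        (hf.intervalIntegrable) (hf.intervalIntegrable) (b := x) (c := y)]
      ring
    have hslope : slope (fun u => ∫ t in a..u, f t) x y - f x
        = (y - x)⁻¹ * (∫ t in x..y, (f t - f x)) := by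
      rw [intervalIntegral.integral_sub hf.intervalIntegrable intervalIntegrable_const,
        intervalIntegral.integral_const, smul_eq_mul, slope_def_field, hgg]
      have : y - x ≠ 0 := sub_ne_zero.2 hyx
      field_simp
    rw [hslope]
    have hIcb : IntegrableOn (fun t => ‖f t - f x‖) (Metric.closedBall x |y - x|) := by
      apply Integrable.norm
      exact hf.integrableOn.sub (integrableOn_const (by
        rw [Real.volume_closedBall]; exact ENNReal.ofReal_ne_top))
    have hsub : Set.uIoc x y ⊆ Metric.closedBall x |y - x| := by
      intro t ht
      rcases Set.mem_uIoc.1 ht with h | h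
      · simp only [Metric.mem_closedBall, Real.dist_eq]
        rw [abs_of_pos (by linarith [h.1, h.2]),
          abs_of_nonneg (by linarith [h.1, h.2] : (0:ℝ) ≤ y - x)]
        linarith [h.2]
      · simp only [Metric.mem_closedBall, Real.dist_eq]
        rw [abs_of_nonpos (by linarith [h.1, h.2] : t - x ≤ 0),
          abs_of_nonpos (by linarith [h.1, h.2] : y - x ≤ 0)]
        linarith [h.1]
    have h1 : ‖∫ t in x..y, (f t - f x)‖
        ≤ ∫ t in Metric.closedBall x |y - x|, ‖f t - f x‖ := by
      refine le_trans intervalIntegral.norm_integral_le_integral_norm_uIoc ?_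
      exact setIntegral_mono_set hIcb (Eventually.of_forall fun t => norm_nonneg _)
        (HasSubset.Subset.eventuallyLE hsub)
    have h2 : (∫ t in Metric.closedBall x |y - x|, ‖f t - f x‖)
        = (2 * |y - x|) * ⨍ t in Metric.closedBall x |y - x|, ‖f t - f x‖ := by
      rw [setAverage_eq, Real.volume_real_closedBall (by positivity)]
      rw [smul_eq_mul, ← mul_assoc, mul_inv_cancel₀ (by positivity), one_mul]
    calc ‖(y - x)⁻¹ * (∫ t in x..y, (f t - f x))‖
        = |y - x|⁻¹ * ‖∫ t in x..y, (f t - f x)‖ := by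
          rw [norm_mul, norm_inv, Real.norm_eq_abs, Real.norm_eq_abs]
      _ ≤ |y - x|⁻¹ * ((2 * |y - x|) * ⨍ t in Metric.closedBall x |y - x|, ‖f t - f x‖) := by
          rw [← h2]; exact mul_le_mul_of_nonneg_left h1 (by positivity)
      _ = 2 * ⨍ t in Metric.closedBall x |y - x|, ‖f t - f x‖ := by
          field_simp
  have := squeeze_zero_norm' key hav
  have h2 := this.add_const (f x)
  simpa using h2

set_option maxHeartbeats 2000000 in
/-- **Energy identity.** For an m-equivariant finite-energy map with profile v,
v(0+) = -k̂, v(∞) = k̂: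
E(u) = π ∫ |v_r - (m/r) v × Rv|² r dr + 4πm. -/
theorem statement5 (m : ℕ) (hm : 1 ≤ m) (v dv : ℝ → V3)
    (hAC : LocAC v dv)
    (hsph : ∀ r ∈ Ioi (0:ℝ), nsq3 (v r) = 1)
    (hfin : IntegrableOn (eDen m v dv) (Ioi (0:ℝ)))
    (h0 : Tendsto v (nhdsWithin 0 (Ioi 0)) (nhds negkHat))
    (hinf : Tendsto v atTop (nhds kHat)) :
    energy m v dv
      = π * (∫ r in Ioi (0:ℝ),
          nsq3 (fun i => dv r i - ((m : ℝ) / r) * cross3 (v r) (Rv (v r)) i) * r)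
        + 4 * π * m := by
  classical
  have hM0 : (0:ℝ) ≤ (m:ℝ) := Nat.cast_nonneg m
  -- Step 1: a.e. differentiability with derivative dv
  have hDer : ∀ᵐ x ∂(volume : Measure ℝ), x ∈ Ioi (0:ℝ) →
      ∀ i, HasDerivAt (fun s => v s i) (dv x i) x := by
    have key : ∀ n : ℕ, ∀ i : Fin 3, ∀ᵐ x ∂(volume : Measure ℝ),
        x ∈ Ioo (1/((n:ℝ)+1)) ((n:ℝ)+1) → HasDerivAt (fun s => v s i) (dv x i) x := by
      intro n i
      set a : ℝ := 1/((n:ℝ)+1) with ha_def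
      set b : ℝ := (n:ℝ)+1 with hb_def
      have ha : 0 < a := by positivity
      have hab : a ≤ b := by
        rw [ha_def, hb_def, div_le_iff₀ (by positivity)]
        nlinarith [Nat.cast_nonneg (α := ℝ) n]
      have hii : IntervalIntegrable (fun r => dv r i) volume a b := hAC.1 a b ha hab i
      have hIoo : IntegrableOn (fun r => dv r i) (Ioo a b) :=
        (hii.1).mono_set Ioo_subset_Ioc_self
      have hg : Integrable ((Ioo a b).indicator (fun r => dv r i)) volume :=
        (integrable_indicator_iff measurableSet_Ioo).2 hIoo
      filter_upwards [ftc_ae hg a] with x hx hmem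
      have hgx : (Ioo a b).indicator (fun r => dv r i) x = dv x i :=
        indicator_of_mem hmem _
      have heq : (fun u => v a i + ∫ t in a..u, (Ioo a b).indicator (fun r => dv r i) t)
          =ᶠ[nhds x] (fun u => v u i) := by
        filter_upwards [isOpen_Ioo.mem_nhds hmem] with u hu
        have h1 : (∫ t in a..u, (Ioo a b).indicator (fun r => dv r i) t)
            = ∫ t in a..u, dv t i := by
          apply intervalIntegral.integral_congr_ae
          apply Eventually.of_forall
          intro t ht
          rw [Set.uIoc_of_le hu.1.le] at ht
          exact Set.indicator_of_mem (show t ∈ Ioo a b from ⟨ht.1, lt_of_le_of_lt ht.2 hu.2⟩) _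
        have h2 : v u i - v a i = ∫ t in a..u, dv t i := hAC.2 a u ha hu.1.le i
        rw [h1, ← h2]; ring
      have hder : HasDerivAt
          (fun u => v a i + ∫ t in a..u, (Ioo a b).indicator (fun r => dv r i) t)
          (dv x i) x := by
        simpa [hgx] using (hx.const_add (v a i))
      exact hder.congr_of_eventuallyEq heq.symm
    have key2 : ∀ᵐ x ∂(volume : Measure ℝ), ∀ n : ℕ, ∀ i : Fin 3,
        x ∈ Ioo (1/((n:ℝ)+1)) ((n:ℝ)+1) → HasDerivAt (fun s => v s i) (dv x i) x := by
      rw [ae_all_iff]; intro n; rw [ae_all_iff]; exact key n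
    filter_upwards [key2] with x hx hx0 i
    have hx0' : (0:ℝ) < x := hx0
    obtain ⟨n, hn⟩ := exists_nat_ge (max x x⁻¹)
    have h1 : x < (n:ℝ)+1 := lt_of_le_of_lt (le_trans (le_max_left _ _) hn) (lt_add_one _)
    have h2 : 1/((n:ℝ)+1) < x := by
      rw [div_lt_iff₀ (by positivity)]
      have h3 : x⁻¹ ≤ (n:ℝ) := le_trans (le_max_right _ _) hn
      have hxx : x * x⁻¹ = 1 := mul_inv_cancel₀ (ne_of_gt hx0')
      nlinarith
    exact hx n i ⟨h2, h1⟩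
  -- Step 2: orthogonality v · dv = 0 a.e.
  have horth : ∀ᵐ x ∂(volume : Measure ℝ), x ∈ Ioi (0:ℝ) →
      v x 0 * dv x 0 + v x 1 * dv x 1 + v x 2 * dv x 2 = 0 := by
    filter_upwards [hDer] with x hx hx0
    have h := hx hx0
    have hsum : HasDerivAt (fun s => v s 0 * v s 0 + v s 1 * v s 1 + v s 2 * v s 2)
        (dv x 0 * v x 0 + v x 0 * dv x 0 + (dv x 1 * v x 1 + v x 1 * dv x 1)
          + (dv x 2 * v x 2 + v x 2 * dv x 2)) x :=
      (((h 0).mul (h 0)).add ((h 1).mul (h 1))).add ((h 2).mul (h 2))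
    have hconst : (fun s => v s 0 * v s 0 + v s 1 * v s 1 + v s 2 * v s 2)
        =ᶠ[nhds x] (fun _ => (1:ℝ)) := by
      filter_upwards [isOpen_Ioi.mem_nhds hx0] with s hs
      have h4 := hsph s hs
      simp only [nsq3] at h4
      nlinarith [h4]
    have h0' : HasDerivAt (fun s => v s 0 * v s 0 + v s 1 * v s 1 + v s 2 * v s 2) 0 x :=
      (hasDerivAt_const x (1:ℝ)).congr_of_eventuallyEq hconst
    have := hsum.unique h0'
    linarith
  have horth' := (ae_restrict_iff' measurableSet_Ioi).2 horth
  have hDer' := (ae_restrict_iff' measurableSet_Ioi).2 hDer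
  -- Step 3: pointwise Bogomolny identity a.e.
  set F : ℝ → ℝ := fun r =>
    nsq3 (fun i => dv r i - ((m : ℝ) / r) * cross3 (v r) (Rv (v r)) i) * r with hF_def
  have hEq : ∀ᵐ r ∂(volume.restrict (Ioi (0:ℝ))),
      eDen m v dv r = F r + 2*(m:ℝ)*(dv r 2) := by
    filter_upwards [horth', ae_restrict_mem measurableSet_Ioi] with r ho hr
    have hs := hsph r hr
    have hrpos : (0:ℝ) < r := hr
    have hr' : r ≠ 0 := ne_of_gt hrpos
    have hoo := ho
    simp only [nsq3] at hs
    simp only [hF_def, eDen, nsq3, cross3, Rv, Matrix.cons_val_zero, Matrix.cons_val_one,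
      Matrix.head_cons, Matrix.cons_val_two, Matrix.tail_cons]
    field_simp
    linear_combination (2*(m:ℝ)*(dv r 2)*r - (m:ℝ)^2*((v r 0)^2+(v r 1)^2)) * hs
      + (-2*(m:ℝ)*(v r 2)*r) * hoo
  -- Step 4: measurability of dv 2
  have hmeas2 : AEStronglyMeasurable (fun r => dv r 2) (volume.restrict (Ioi (0:ℝ))) := by
    apply (measurable_deriv (fun s => v s 2)).aestronglyMeasurable.congr
    filter_upwards [hDer'] with x hx
    exact (hx 2).deriv
  -- Step 5: pointwise bound
  have hbound : ∀ᵐ r ∂(volume.restrict (Ioi (0:ℝ))),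
      ‖2*(m:ℝ)*(dv r 2)‖ ≤ eDen m v dv r := by
    filter_upwards [horth', ae_restrict_mem measurableSet_Ioi] with r ho hr
    have hs := hsph r hr
    have hrpos : (0:ℝ) < r := hr
    have hoo := ho
    simp only [nsq3] at hs
    have key : (r*dv r 0+(m:ℝ)*v r 0*v r 2)^2+(r*dv r 1+(m:ℝ)*v r 1*v r 2)^2
        +(r*dv r 2-(m:ℝ)*((v r 0)^2+(v r 1)^2))^2
        = ((dv r 0)^2+(dv r 1)^2+(dv r 2)^2)*r^2 + (m:ℝ)^2*((v r 0)^2+(v r 1)^2)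
          - 2*(m:ℝ)*(dv r 2)*r := by
      linear_combination (2*r*(m:ℝ)*(v r 2)) * hoo
        + ((m:ℝ)^2*((v r 0)^2+(v r 1)^2) - 2*(m:ℝ)*(dv r 2)*r) * hs
    have key2 : (r*dv r 0-(m:ℝ)*v r 0*v r 2)^2+(r*dv r 1-(m:ℝ)*v r 1*v r 2)^2
        +(r*dv r 2+(m:ℝ)*((v r 0)^2+(v r 1)^2))^2
        = ((dv r 0)^2+(dv r 1)^2+(dv r 2)^2)*r^2 + (m:ℝ)^2*((v r 0)^2+(v r 1)^2)
          + 2*(m:ℝ)*(dv r 2)*r := by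
      linear_combination (-2*r*(m:ℝ)*(v r 2)) * hoo
        + ((m:ℝ)^2*((v r 0)^2+(v r 1)^2) + 2*(m:ℝ)*(dv r 2)*r) * hs
    have habs : |2*(m:ℝ)*(dv r 2)| * r
        ≤ ((dv r 0)^2+(dv r 1)^2+(dv r 2)^2)*r^2 + (m:ℝ)^2*((v r 0)^2+(v r 1)^2) := by
      rw [abs_mul, abs_mul, abs_of_nonneg hM0, abs_of_nonneg (by norm_num : (0:ℝ) ≤ 2)]
      rcases abs_cases (dv r 2) with ⟨h, _⟩ | ⟨h, _⟩ <;> rw [h] <;>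
        nlinarith [sq_nonneg (r*dv r 0+(m:ℝ)*v r 0*v r 2),
          sq_nonneg (r*dv r 1+(m:ℝ)*v r 1*v r 2),
          sq_nonneg (r*dv r 2-(m:ℝ)*((v r 0)^2+(v r 1)^2)),
          sq_nonneg (r*dv r 0-(m:ℝ)*v r 0*v r 2),
          sq_nonneg (r*dv r 1-(m:ℝ)*v r 1*v r 2),
          sq_nonneg (r*dv r 2+(m:ℝ)*((v r 0)^2+(v r 1)^2)), key, key2]
    have heden : eDen m v dv r
        = (((dv r 0)^2+(dv r 1)^2+(dv r 2)^2)*r^2 + (m:ℝ)^2*((v r 0)^2+(v r 1)^2))/r := by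
      simp only [eDen, nsq3]
      field_simp
    rw [heden, Real.norm_eq_abs, le_div_iff₀ hrpos]
    exact habs
  -- Step 6: integrability
  have hint2 : IntegrableOn (fun r => 2*(m:ℝ)*(dv r 2)) (Ioi (0:ℝ)) :=
    Integrable.mono' hfin (hmeas2.const_mul (2*(m:ℝ))) hbound
  have hm2 : (2*(m:ℝ)) ≠ 0 := by
    have : (1:ℝ) ≤ (m:ℝ) := by exact_mod_cast hm
    positivity
  have hdv2 : IntegrableOn (fun r => dv r 2) (Ioi (0:ℝ)) := by
    have h := hint2.const_mul ((2*(m:ℝ))⁻¹)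
    have : (fun r => (2*(m:ℝ))⁻¹ * (2*(m:ℝ)*(dv r 2))) = fun r => dv r 2 := by
      funext r
      rw [← mul_assoc, inv_mul_cancel₀ hm2, one_mul]
    rwa [this] at h
  -- Step 7: the boundary term
  have hlim : (∫ r in Ioi (0:ℝ), dv r 2) = 2 := by
    set s : ℕ → Set ℝ := fun n => Ioc (1/((n:ℝ)+1)) ((n:ℝ)+1) with hs_def
    have hmono : Monotone s := by
      intro p q hpq
      apply Ioc_subset_Ioc
      · apply one_div_le_one_div_of_le (by positivity)
        have : (p:ℝ) ≤ (q:ℝ) := Nat.cast_le.2 hpq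
        linarith
      · have : (p:ℝ) ≤ (q:ℝ) := Nat.cast_le.2 hpq
        linarith
    have hU : (⋃ n, s n) = Ioi (0:ℝ) := by
      ext x
      simp only [hs_def, mem_iUnion, mem_Ioc, mem_Ioi]
      constructor
      · rintro ⟨n, h1, _⟩
        exact lt_trans (by positivity) h1
      · intro hx
        obtain ⟨n, hn⟩ := exists_nat_ge (max x x⁻¹)
        refine ⟨n, ?_, ?_⟩
        · rw [div_lt_iff₀ (by positivity)]
          have h3 : x⁻¹ ≤ (n:ℝ) := le_trans (le_max_right _ _) hn
          have hxx : x * x⁻¹ = 1 := mul_inv_cancel₀ (ne_of_gt hx)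
          nlinarith
        · have := le_trans (le_max_left _ _) hn
          linarith
    have hT : Tendsto (fun n => ∫ r in s n, dv r 2) atTop
        (nhds (∫ r in Ioi (0:ℝ), dv r 2)) := by
      have h := tendsto_setIntegral_of_monotone (fun n => measurableSet_Ioc) hmono
        (by rw [hU]; exact hdv2)
      rwa [hU] at h
    have hT2 : ∀ n : ℕ, (∫ r in s n, dv r 2) = v ((n:ℝ)+1) 2 - v (1/((n:ℝ)+1)) 2 := by
      intro n
      have ha : (0:ℝ) < 1/((n:ℝ)+1) := by positivity
      have hab : 1/((n:ℝ)+1) ≤ (n:ℝ)+1 := by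
        rw [div_le_iff₀ (by positivity)]
        nlinarith [Nat.cast_nonneg (α := ℝ) n]
      have h := hAC.2 (1/((n:ℝ)+1)) ((n:ℝ)+1) ha hab 2
      rw [intervalIntegral.integral_of_le hab] at h
      exact h.symm
    have hTb : Tendsto (fun n : ℕ => v ((n:ℝ)+1) 2 - v (1/((n:ℝ)+1)) 2) atTop
        (nhds ((1:ℝ) - (-1))) := by
      apply Tendsto.sub
      · have h1 : Tendsto (fun n : ℕ => ((n:ℝ)+1)) atTop atTop :=
          tendsto_atTop_add_const_right _ 1 tendsto_natCast_atTop_atTop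
        have h2 := ((continuous_apply (2 : Fin 3)).tendsto kHat).comp (hinf.comp h1)
        simpa [kHat, Function.comp_def] using h2
      · have h2 : Tendsto (fun n : ℕ => 1/((n:ℝ)+1)) atTop (nhdsWithin 0 (Ioi 0)) := by
          apply tendsto_nhdsWithin_of_tendsto_nhds_of_eventually_within
          · exact tendsto_one_div_add_atTop_nhds_zero_nat
          · filter_upwards with n
            have : (0:ℝ) < 1/((n:ℝ)+1) := by positivity
            exact this
        have h3 := ((continuous_apply (2 : Fin 3)).tendsto negkHat).comp (h0.comp h2)
        simpa [negkHat, Function.comp_def] using h3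
    have h4 : Tendsto (fun n => ∫ r in s n, dv r 2) atTop (nhds ((1:ℝ) - (-1))) := by
      apply hTb.congr
      intro n
      exact (hT2 n).symm
    have := tendsto_nhds_unique hT h4
    rw [this]; norm_num
  -- Step 8: conclusion
  have hFeq : (fun r => eDen m v dv r - 2*(m:ℝ)*(dv r 2))
      =ᵐ[volume.restrict (Ioi (0:ℝ))] F := by
    filter_upwards [hEq] with r h
    rw [h]; ring
  have hFint : IntegrableOn F (Ioi (0:ℝ)) := (hfin.sub hint2).congr hFeq
  have hsplit : (∫ r in Ioi (0:ℝ), eDen m v dv r)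
      = (∫ r in Ioi (0:ℝ), F r) + ∫ r in Ioi (0:ℝ), 2*(m:ℝ)*(dv r 2) := by
    rw [← integral_add hFint hint2]
    apply integral_congr_ae
    filter_upwards [hEq] with r h
    exact h
  have hI2 : (∫ r in Ioi (0:ℝ), 2*(m:ℝ)*(dv r 2)) = 4*(m:ℝ) := by
    rw [integral_const_mul, hlim]; ring
  show π * (∫ r in Ioi (0:ℝ), eDen m v dv r) = _
  rw [hsplit, hI2]
  ring


end
end

section
/- Let m ≥ 1 be an integer and let v : (0,∞) → S² be locally absolutely continuous with boundary values v(0+) = −k̂ and v(r) → k̂ as r → ∞. Then the energy satisfies the topological lower bound π∫₀^∞(|v'(r)|² + (m²/r²)(v₁(r)²+v₂(r)²)) r dr ≥ 4πm. -/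
open MeasureTheory Set Real Filter
open scoped ENNReal

noncomputable section

open Metric in
lemma myOfRealIntLe {f : ℝ → ℝ} {μ : Measure ℝ} (hf : Integrable f μ) :
    ENNReal.ofReal (∫ x, f x ∂μ) ≤ ∫⁻ x, ENNReal.ofReal (f x) ∂μ := by
  have hmax : Integrable (fun x => max (f x) 0) μ := hf.pos_part
  calc ENNReal.ofReal (∫ x, f x ∂μ) ≤ ENNReal.ofReal (∫ x, max (f x) 0 ∂μ) :=
        ENNReal.ofReal_le_ofReal (integral_mono hf hmax fun x => le_max_left _ _)
    _ = ∫⁻ x, ENNReal.ofReal (max (f x) 0) ∂μ :=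
        ofReal_integral_eq_lintegral_ofReal hmax
          (Filter.Eventually.of_forall fun x => le_max_right _ _)
    _ = ∫⁻ x, ENNReal.ofReal (f x) ∂μ := by
        apply lintegral_congr; intro x
        rcases le_total (f x) 0 with h | h
        · simp [max_eq_right h, ENNReal.ofReal_of_nonpos h]
        · simp [max_eq_left h]

open Metric in
lemma myAEDeriv {f F : ℝ → ℝ} {c : ℝ}
    (hint : ∀ b : ℝ, IntegrableOn f (Ioc c b) volume)
    (hF : ∀ a b : ℝ, c ≤ a → a ≤ b → F b - F a = ∫ r in a..b, f r) :
    ∀ᵐ x, x ∈ Ioi c → HasDerivAt F (f x) x := by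
  set g : ℝ → ℝ := (Ioi c).indicator f with hg
  have hgloc : LocallyIntegrable g volume := by
    rw [locallyIntegrable_iff]
    intro k hk
    obtain ⟨M, hM⟩ := hk.isBounded.subset_closedBall 0
    have h1 : IntegrableOn ((Ioc c M).indicator f) k volume :=
      ((hint M).integrable_indicator measurableSet_Ioc).integrableOn
    apply h1.congr_fun ?_ hk.measurableSet
    intro t ht
    have htM : t ≤ M := by
      have h2 := hM ht
      rw [Real.closedBall_eq_Icc] at h2
      have := h2.2; linarith
    by_cases htc : c < t
    · simp [hg, Set.indicator_apply, mem_Ioc, mem_Ioi, htc, htM]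
    · simp [hg, Set.indicator_apply, mem_Ioc, mem_Ioi, htc]
  have hleb := IsUnifLocDoublingMeasure.ae_tendsto_average_norm_sub (μ := volume) hgloc 1
  filter_upwards [hleb] with x hx hxc
  have hTend : Tendsto (fun δ : ℝ => ⨍ y in closedBall x δ, ‖g y - g x‖) (nhdsWithin 0 (Ioi 0))
      (nhds 0) := by
    apply hx (fun _ => x) (fun δ => δ) tendsto_id
    filter_upwards [eventually_mem_nhdsWithin] with δ (hδ : δ ∈ Ioi (0:ℝ))
    exact mem_closedBall_self (by simpa using hδ.le)
  have hgx : g x = f x := Set.indicator_of_mem hxc f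
  rw [hasDerivAt_iff_isLittleO, Asymptotics.isLittleO_iff]
  intro ε hε
  have h1 : ∀ᶠ δ in nhdsWithin (0:ℝ) (Ioi 0),
      ⨍ y in closedBall x δ, ‖g y - g x‖ < ε / 2 := hTend.eventually_lt_const (by linarith)
  rw [eventually_nhdsWithin_iff, Metric.eventually_nhds_iff] at h1
  obtain ⟨δ₀, hδ₀, hδ⟩ := h1
  have hxcpos : 0 < x - c := sub_pos.2 hxc
  rw [Metric.eventually_nhds_iff]
  refine ⟨min δ₀ (x - c), lt_min hδ₀ hxcpos, ?_⟩
  intro y hy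
  rcases eq_or_ne y x with rfl | hyx
  · simp
  set δ := |y - x| with hδdef
  have hδpos : 0 < δ := abs_pos.2 (sub_ne_zero.2 hyx)
  have hδlt : δ < min δ₀ (x - c) := by rwa [dist_eq] at hy
  have hδlt1 : δ < δ₀ := lt_of_lt_of_le hδlt (min_le_left _ _)
  have hδlt2 : δ < x - c := lt_of_lt_of_le hδlt (min_le_right _ _)
  have habs1 : y - x ≤ δ := le_abs_self _
  have habs2 : -(δ) ≤ y - x := neg_abs_le _
  have hcy : c < y := by linarith
  -- F y - F x = ∫ x..y g
  have hEq : EqOn f g (uIcc x y) := by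
    intro t ht
    rw [hg, Set.indicator_of_mem]
    rcases mem_uIcc.1 ht with h | h
    · exact lt_of_lt_of_le hxc h.1
    · exact lt_of_lt_of_le hcy h.1
  have hFy : F y - F x = ∫ t in x..y, g t := by
    rcases le_total x y with h | h
    · rw [← intervalIntegral.integral_congr hEq]
      exact hF x y hxc.le h
    · have h2 : F x - F y = ∫ t in y..x, f t := hF y x hcy.le h
      have h3 : (∫ t in y..x, f t) = ∫ t in y..x, g t :=
        intervalIntegral.integral_congr (by rwa [uIcc_comm] at hEq)
      rw [intervalIntegral.integral_symm]
      rw [h3] at h2; linarith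
  have hgi : IntervalIntegrable g volume x y :=
    (hgloc.integrableOn_isCompact isCompact_uIcc).intervalIntegrable
  have hsub : F y - F x - (y - x) • f x = ∫ t in x..y, (g t - g x) := by
    rw [intervalIntegral.integral_sub hgi intervalIntegrable_const, hFy,
      intervalIntegral.integral_const, hgx]
  have hball : Set.uIoc x y ⊆ closedBall x δ := by
    intro t ht
    rw [Set.uIoc] at ht
    have ht1 : min x y < t := ht.1
    have ht2 : t ≤ max x y := ht.2
    rw [Real.closedBall_eq_Icc]
    constructor
    · rcases le_total x y with h | h
      · rw [min_eq_left h] at ht1; linarith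
      · rw [min_eq_right h] at ht1; linarith
    · rcases le_total x y with h | h
      · rw [max_eq_right h] at ht2; linarith
      · rw [max_eq_left h] at ht2; linarith
  have hnormle : ‖F y - F x - (y - x) • f x‖ ≤ ∫ t in closedBall x δ, ‖g t - g x‖ := by
    rw [hsub]
    refine le_trans (intervalIntegral.norm_integral_le_integral_norm_uIoc) ?_
    apply setIntegral_mono_set
    · exact ((hgloc.integrableOn_isCompact (isCompact_closedBall x δ)).sub
        (integrableOn_const measure_closedBall_lt_top.ne)).norm
    · exact Filter.Eventually.of_forall fun t => norm_nonneg _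
    · exact Filter.Eventually.of_forall hball
  have hvol : (volume (closedBall x δ)).toReal = 2 * δ := by
    rw [Real.volume_closedBall, ENNReal.toReal_ofReal (by linarith)]
  have havg : ∫ t in closedBall x δ, ‖g t - g x‖
      = (2 * δ) * ⨍ t in closedBall x δ, ‖g t - g x‖ := by
    rw [setAverage_eq, measureReal_def, smul_eq_mul, ← hvol, ← mul_assoc,
      mul_inv_cancel₀ (a := (volume (closedBall x δ)).toReal) (by rw [hvol]; positivity), one_mul]
  have hav : ⨍ t in closedBall x δ, ‖g t - g x‖ < ε / 2 := by
    apply hδ _ hδpos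
    rw [dist_eq, sub_zero, abs_of_pos hδpos]; exact hδlt1
  calc ‖F y - F x - (y - x) • f x‖ ≤ (2 * δ) * ⨍ t in closedBall x δ, ‖g t - g x‖ := by
        rw [← havg]; exact hnormle
    _ ≤ (2 * δ) * (ε / 2) := by
        apply mul_le_mul_of_nonneg_left hav.le (by linarith)
    _ = ε * ‖y - x‖ := by rw [Real.norm_eq_abs, ← hδdef]; ring


lemma myDeriv {v dv : ℝ → V3} (hAC : LocAC v dv) :
    ∀ᵐ x, x ∈ Ioi (0:ℝ) → ∀ i, HasDerivAt (fun s => v s i) (dv x i) x := by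
  have H : ∀ (n : ℕ) (i : Fin 3), ∀ᵐ x, x ∈ Ioi (1/((n:ℝ)+1)) →
      HasDerivAt (fun s => v s i) (dv x i) x := by
    intro n i
    apply myAEDeriv (c := 1/((n:ℝ)+1))
    · intro b
      by_cases hb : 1/((n:ℝ)+1) ≤ b
      · exact (intervalIntegrable_iff_integrableOn_Ioc_of_le hb).1
          (hAC.1 _ b (by positivity) hb i)
      · rw [Ioc_eq_empty (fun h => hb h.le)]
        exact integrableOn_empty
    · intro a b ha hab
      exact hAC.2 a b (lt_of_lt_of_le (by positivity) ha) hab i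
  have H2 : ∀ᵐ x, ∀ (n : ℕ) (i : Fin 3), x ∈ Ioi (1/((n:ℝ)+1)) →
      HasDerivAt (fun s => v s i) (dv x i) x :=
    ae_all_iff.2 fun n => ae_all_iff.2 fun i => H n i
  filter_upwards [H2] with x hx hx0 i
  obtain ⟨n, hn⟩ := exists_nat_one_div_lt (show (0:ℝ) < x from hx0)
  exact hx n i hn

lemma myOrth {v dv : ℝ → V3} (hAC : LocAC v dv) (hsph : ∀ r ∈ Ioi (0:ℝ), nsq3 (v r) = 1) :
    ∀ᵐ x, x ∈ Ioi (0:ℝ) → dot3 (v x) (dv x) = 0 := by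
  filter_upwards [myDeriv hAC] with x hx hx0
  have hd := hx hx0
  have hG : HasDerivAt (fun s => (v s 0) * (v s 0) + (v s 1) * (v s 1) + (v s 2) * (v s 2))
      ((dv x 0 * v x 0 + v x 0 * dv x 0) + (dv x 1 * v x 1 + v x 1 * dv x 1)
        + (dv x 2 * v x 2 + v x 2 * dv x 2)) x :=
    (((hd 0).mul (hd 0)).add ((hd 1).mul (hd 1))).add ((hd 2).mul (hd 2))
  have hconst : (fun s => (v s 0) * (v s 0) + (v s 1) * (v s 1) + (v s 2) * (v s 2))
      =ᶠ[nhds x] fun _ => 1 := by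
    filter_upwards [isOpen_Ioi.mem_nhds hx0] with s hs
    have := hsph s hs
    simp only [nsq3] at this
    nlinarith [this]
  have h0 : HasDerivAt (fun s => (v s 0) * (v s 0) + (v s 1) * (v s 1) + (v s 2) * (v s 2))
      0 x := (hasDerivAt_const x (1:ℝ)).congr_of_eventuallyEq hconst
  have := hG.unique h0
  simp only [dot3]
  nlinarith [this]

lemma myPoint (m : ℕ) {r : ℝ} (hr : 0 < r) (a b : V3) (hs : nsq3 a = 1)
    (ho : dot3 a b = 0) :
    2 * (m:ℝ) * (b 2) ≤ (nsq3 b + ((m : ℝ) ^ 2 / r ^ 2) * ((a 0) ^ 2 + (a 1) ^ 2)) * r := by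
  simp only [nsq3, dot3] at *
  set A := b 0 ^ 2 + b 1 ^ 2 + b 2 ^ 2 with hA
  set P := a 0 ^ 2 + a 1 ^ 2 with hP
  have hAnn : 0 ≤ A := by positivity
  have hPnn : 0 ≤ P := by positivity
  have key1 : (b 2) ^ 2 ≤ A * P := by
    have h : a 2 * b 2 = -(a 0 * b 0 + a 1 * b 1) := by linarith
    have ho2 : (a 2) ^ 2 * (b 2) ^ 2 = (a 0 * b 0 + a 1 * b 1) ^ 2 := by
      calc (a 2) ^ 2 * (b 2) ^ 2 = (a 2 * b 2) ^ 2 := by ring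
        _ = (a 0 * b 0 + a 1 * b 1) ^ 2 := by rw [h]; ring
    have cauchy : (a 0 * b 0 + a 1 * b 1) ^ 2 ≤ P * (b 0 ^ 2 + b 1 ^ 2) := by
      rw [hP]; nlinarith [sq_nonneg (a 0 * b 1 - a 1 * b 0)]
    nlinarith [ho2, cauchy, hs, hA, hP, sq_nonneg (b 2)]
  -- 2 m b2 r ≤ A r^2 + m^2 P
  have key2 : 2 * (m:ℝ) * (b 2) * r ≤ A * r ^ 2 + (m:ℝ) ^ 2 * P := by
    have hb2 : b 2 ≤ Real.sqrt A * Real.sqrt P := by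
      have h1 : b 2 ≤ |b 2| := le_abs_self _
      have h2 : |b 2| = Real.sqrt ((b 2) ^ 2) := (Real.sqrt_sq_eq_abs _).symm
      have h3 : Real.sqrt ((b 2) ^ 2) ≤ Real.sqrt (A * P) := Real.sqrt_le_sqrt key1
      rw [Real.sqrt_mul hAnn] at h3
      linarith
    have hsA : Real.sqrt A ^ 2 = A := Real.sq_sqrt hAnn
    have hsP : Real.sqrt P ^ 2 = P := Real.sq_sqrt hPnn
    have h4 : 0 ≤ 2 * (m:ℝ) * r * (Real.sqrt A * Real.sqrt P - b 2) :=
      mul_nonneg (by positivity) (sub_nonneg.2 hb2)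
    nlinarith [h4, sq_nonneg (Real.sqrt A * r - (m:ℝ) * Real.sqrt P), hsA, hsP]
  have hexp : (A + (m:ℝ) ^ 2 / r ^ 2 * P) * r - 2 * (m:ℝ) * (b 2)
      = (A * r ^ 2 + (m:ℝ) ^ 2 * P - 2 * (m:ℝ) * (b 2) * r) / r := by
    field_simp
  have : 0 ≤ (A + (m:ℝ) ^ 2 / r ^ 2 * P) * r - 2 * (m:ℝ) * (b 2) := by
    rw [hexp]
    exact div_nonneg (by linarith) hr.le
  linarith


/-- **Topological lower bound on the energy.** For an m-equivariant map with
profile v, v(0+) = -k̂, v(∞) = k̂: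
π ∫ (|v_r|² + (m²/r²)(v₁² + v₂²)) r dr ≥ 4πm
(the energy is taken in ℝ≥0∞, so the bound also covers infinite energy). -/
theorem statement6 (m : ℕ) (hm : 1 ≤ m) (v dv : ℝ → V3)
    (hAC : LocAC v dv)
    (hsph : ∀ r ∈ Ioi (0:ℝ), nsq3 (v r) = 1)
    (h0 : Tendsto v (nhdsWithin 0 (Ioi 0)) (nhds negkHat))
    (hinf : Tendsto v atTop (nhds kHat)) :
    ENNReal.ofReal (4 * π * m)
      ≤ ENNReal.ofReal π * ∫⁻ r in Ioi (0:ℝ), ENNReal.ofReal (eDen m v dv r) := by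
  set I := ∫⁻ r in Ioi (0:ℝ), ENNReal.ofReal (eDen m v dv r) with hI
  have key : ∀ a b : ℝ, 0 < a → a ≤ b →
      ENNReal.ofReal (2 * m * (v b 2 - v a 2)) ≤ I := by
    intro a b ha hab
    have hInt : Integrable (fun r => 2 * (m:ℝ) * dv r 2) (volume.restrict (Ioc a b)) := by
      have h1 : IntegrableOn (fun r => dv r 2) (Ioc a b) volume :=
        (intervalIntegrable_iff_integrableOn_Ioc_of_le hab).1 (hAC.1 a b ha hab 2)
      exact h1.const_mul _
    have hval : (∫ r in Ioc a b, 2 * (m:ℝ) * dv r 2) = 2 * m * (v b 2 - v a 2) := by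
      rw [← intervalIntegral.integral_of_le hab, intervalIntegral.integral_const_mul,
        ← hAC.2 a b ha hab 2]
    have hmono : (∫⁻ r in Ioc a b, ENNReal.ofReal (2 * (m:ℝ) * dv r 2))
        ≤ ∫⁻ r in Ioc a b, ENNReal.ofReal (eDen m v dv r) := by
      apply lintegral_mono_ae
      filter_upwards [ae_restrict_of_ae (myOrth hAC hsph), ae_restrict_mem measurableSet_Ioc]
        with r ho hr
      have hr0 : 0 < r := lt_of_lt_of_le ha hr.1.le
      apply ENNReal.ofReal_le_ofReal
      have := myPoint m hr0 (v r) (dv r) (hsph r hr0) (ho hr0)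
      simpa [eDen] using this
    calc ENNReal.ofReal (2 * m * (v b 2 - v a 2))
        = ENNReal.ofReal (∫ r in Ioc a b, 2 * (m:ℝ) * dv r 2) := by rw [hval]
      _ ≤ ∫⁻ r in Ioc a b, ENNReal.ofReal (2 * (m:ℝ) * dv r 2) := myOfRealIntLe hInt
      _ ≤ ∫⁻ r in Ioc a b, ENNReal.ofReal (eDen m v dv r) := hmono
      _ ≤ I := lintegral_mono_set (fun r hr => lt_of_lt_of_le ha hr.1.le)
  have h4 : ENNReal.ofReal (4 * m) ≤ I := by
    have hb : Tendsto (fun n : ℕ => v (n:ℝ) 2) atTop (nhds 1) := by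
      have h1 : Tendsto (fun n : ℕ => v (n:ℝ)) atTop (nhds kHat) :=
        hinf.comp tendsto_natCast_atTop_atTop
      have h2 := ((continuous_apply (2 : Fin 3)).tendsto kHat).comp h1
      simpa [kHat, Function.comp_def] using h2
    have ha : Tendsto (fun n : ℕ => v (1/((n:ℝ)+1)) 2) atTop (nhds (-1)) := by
      have h0' : Tendsto (fun n : ℕ => (1/((n:ℝ)+1))) atTop (nhdsWithin 0 (Ioi 0)) := by
        apply tendsto_nhdsWithin_of_tendsto_nhds_of_eventually_within
        · exact tendsto_one_div_add_atTop_nhds_zero_nat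
        · exact Filter.Eventually.of_forall fun n => Set.mem_Ioi.mpr (by positivity)
      have h1 : Tendsto (fun n : ℕ => v (1/((n:ℝ)+1))) atTop (nhds negkHat) := h0.comp h0'
      have h2 := ((continuous_apply (2 : Fin 3)).tendsto negkHat).comp h1
      simpa [negkHat, Function.comp_def] using h2
    have hlim : Tendsto (fun n : ℕ =>
        ENNReal.ofReal (2 * m * (v (n:ℝ) 2 - v (1/((n:ℝ)+1)) 2))) atTop
        (nhds (ENNReal.ofReal (2 * m * (1 - (-1))))) := by
      apply (ENNReal.continuous_ofReal.tendsto _).comp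
      exact (hb.sub ha).const_mul _
    have hle : ∀ᶠ n : ℕ in atTop,
        ENNReal.ofReal (2 * m * (v (n:ℝ) 2 - v (1/((n:ℝ)+1)) 2)) ≤ I := by
      filter_upwards [eventually_ge_atTop 1] with n hn
      apply key
      · positivity
      · have h1 : (1:ℝ) ≤ (n:ℝ) := by exact_mod_cast hn
        have h2 : (1:ℝ)/((n:ℝ)+1) ≤ 1 := by
          rw [div_le_one (by positivity)]; linarith
        linarith
    have := le_of_tendsto hlim hle
    have heq : 2 * (m:ℝ) * (1 - (-1)) = 4 * m := by ring
    rwa [heq] at this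
  calc ENNReal.ofReal (4 * π * m)
      = ENNReal.ofReal π * ENNReal.ofReal (4 * m) := by
        rw [← ENNReal.ofReal_mul pi_pos.le]
        congr 1; ring
    _ ≤ ENNReal.ofReal π * I := by gcongr


end
end

section
/- Let m ≥ 1 be an integer and let v : (0,∞) → S² be locally absolutely continuous with finite energy π∫₀^∞(|v'|² + (m²/r²)(v₁²+v₂²)) r dr < ∞, boundary values v(0+) = −k̂ and v(r) → k̂ as r → ∞, and suppose v satisfies the first-order harmonic map equation v'(r) = (m/r) v(r)×Rv(r) for almost every r > 0 (equivalently, v saturates the energy lower bound 4πm). Then there exist s > 0 and α ∈ ℝ such that v(r) = e^{αR} h(r/s) for all r > 0. -/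
open MeasureTheory Set Real Filter
open scoped ENNReal

noncomputable section

def Fv3 (y : V3) : V3 := cross3 y (Rv y)

lemma Fv3_eq (y : V3) : Fv3 y = ![-(y 0 * y 2), -(y 1 * y 2), y 0 ^ 2 + y 1 ^ 2] := by
  funext i
  fin_cases i <;> simp [Fv3, cross3, Rv] <;> ring


lemma Fv3_apply0 (y : V3) : Fv3 y 0 = -(y 0 * y 2) := by rw [Fv3_eq]; rfl
lemma Fv3_apply1 (y : V3) : Fv3 y 1 = -(y 1 * y 2) := by rw [Fv3_eq]; rfl
lemma Fv3_apply2 (y : V3) : Fv3 y 2 = y 0 ^ 2 + y 1 ^ 2 := by rw [Fv3_eq]; rfl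

lemma h_sq (m : ℕ) {x : ℝ} (hx : 0 < x) : h1f m x ^ 2 + h3f m x ^ 2 = 1 := by
  have hA : (0:ℝ) < x ^ (m:ℤ) := zpow_pos hx _
  rw [h1f, h3f, zpow_neg]
  have h0 : x ^ (m:ℤ) ≠ 0 := hA.ne'
  have hne : x ^ (m:ℤ) + (x ^ (m:ℤ))⁻¹ ≠ 0 := by positivity
  field_simp
  ring

lemma h1_pos (m : ℕ) {x : ℝ} (hx : 0 < x) : 0 < h1f m x := by
  have hA : (0:ℝ) < x ^ (m:ℤ) := zpow_pos hx _
  have hB : (0:ℝ) < x ^ (-(m:ℤ)) := zpow_pos hx _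
  exact div_pos two_pos (by positivity)

lemma h1_hasDeriv (m : ℕ) {x : ℝ} (hx : 0 < x) :
    HasDerivAt (h1f m) (-((m:ℝ)/x) * (h1f m x * h3f m x)) x := by
  have hx0 : x ≠ 0 := hx.ne'
  have hA : (0:ℝ) < x ^ (m:ℤ) := zpow_pos hx _
  have hB : (0:ℝ) < x ^ (-(m:ℤ)) := zpow_pos hx _
  have hD : HasDerivAt (fun y : ℝ => y ^ (m:ℤ) + y ^ (-(m:ℤ)))
      (((m:ℤ):ℝ) * x ^ ((m:ℤ)-1) + ((-(m:ℤ):ℤ):ℝ) * x ^ (-(m:ℤ)-1)) x :=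
    (hasDerivAt_zpow _ _ (Or.inl hx0)).add (hasDerivAt_zpow _ _ (Or.inl hx0))
  have hne : x ^ (m:ℤ) + x ^ (-(m:ℤ)) ≠ 0 := by positivity
  have := (hasDerivAt_const x (2:ℝ)).div hD hne
  refine HasDerivAt.congr_deriv (f := h1f m) this ?_
  rw [h1f, h3f, zpow_sub_one₀ hx0, zpow_sub_one₀ hx0, zpow_neg]
  have h0 : x ^ (m:ℤ) ≠ 0 := hA.ne'
  have hne' : x ^ (m:ℤ) + (x ^ (m:ℤ))⁻¹ ≠ 0 := by positivity
  push_cast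
  field_simp
  ring

lemma h3_hasDeriv (m : ℕ) {x : ℝ} (hx : 0 < x) :
    HasDerivAt (h3f m) (((m:ℝ)/x) * (h1f m x)^2) x := by
  have hx0 : x ≠ 0 := hx.ne'
  have hA : (0:ℝ) < x ^ (m:ℤ) := zpow_pos hx _
  have hB : (0:ℝ) < x ^ (-(m:ℤ)) := zpow_pos hx _
  have hN : HasDerivAt (fun y : ℝ => y ^ (m:ℤ) - y ^ (-(m:ℤ)))
      (((m:ℤ):ℝ) * x ^ ((m:ℤ)-1) - ((-(m:ℤ):ℤ):ℝ) * x ^ (-(m:ℤ)-1)) x :=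
    (hasDerivAt_zpow _ _ (Or.inl hx0)).sub (hasDerivAt_zpow _ _ (Or.inl hx0))
  have hD : HasDerivAt (fun y : ℝ => y ^ (m:ℤ) + y ^ (-(m:ℤ)))
      (((m:ℤ):ℝ) * x ^ ((m:ℤ)-1) + ((-(m:ℤ):ℤ):ℝ) * x ^ (-(m:ℤ)-1)) x :=
    (hasDerivAt_zpow _ _ (Or.inl hx0)).add (hasDerivAt_zpow _ _ (Or.inl hx0))
  have hne : x ^ (m:ℤ) + x ^ (-(m:ℤ)) ≠ 0 := by positivity
  have := hN.div hD hne
  refine HasDerivAt.congr_deriv (f := h3f m) this ?_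
  rw [h1f, zpow_sub_one₀ hx0, zpow_sub_one₀ hx0, zpow_neg]
  have h0 : x ^ (m:ℤ) ≠ 0 := hA.ne'
  have hne' : x ^ (m:ℤ) + (x ^ (m:ℤ))⁻¹ ≠ 0 := by positivity
  push_cast
  field_simp
  ring

def vfld (m : ℕ) (a : ℝ) (t : ℝ) (y : V3) : V3 := fun i => ((m:ℝ) / max a t) * Fv3 y i

lemma quad_bound {p q p' q' D : ℝ} (hp : |p| ≤ 1) (hq' : |q'| ≤ 1)
    (h1 : |p - p'| ≤ D) (h2 : |q - q'| ≤ D) : |p*q - p'*q'| ≤ 2*D := by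
  have e : p*q - p'*q' = p*(q - q') + q'*(p - p') := by ring
  calc |p*q - p'*q'| = |p*(q-q') + q'*(p-p')| := by rw [e]
    _ ≤ |p*(q-q')| + |q'*(p-p')| := abs_add_le _ _
    _ = |p| * |q - q'| + |q'| * |p - p'| := by rw [abs_mul, abs_mul]
    _ ≤ 1*D + 1*D :=
      add_le_add (mul_le_mul hp h2 (abs_nonneg _) zero_le_one)
        (mul_le_mul hq' h1 (abs_nonneg _) zero_le_one)
    _ = 2*D := by ring

lemma Fv3_lip {y z : V3} (hy : ∀ j, |y j| ≤ 1) (hz : ∀ j, |z j| ≤ 1) {D : ℝ}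
    (hd : ∀ j, |y j - z j| ≤ D) (i : Fin 3) : |Fv3 y i - Fv3 z i| ≤ 4 * D := by
  have hD : 0 ≤ D := le_trans (abs_nonneg _) (hd 0)
  have e0 : ∀ w : V3, Fv3 w 0 = -(w 0 * w 2) := fun w => by rw [Fv3_eq]; rfl
  have e1 : ∀ w : V3, Fv3 w 1 = -(w 1 * w 2) := fun w => by rw [Fv3_eq]; rfl
  have e2 : ∀ w : V3, Fv3 w 2 = w 0 ^ 2 + w 1 ^ 2 := fun w => by rw [Fv3_eq]; rfl
  fin_cases i
  · show |Fv3 y 0 - Fv3 z 0| ≤ 4 * D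
    rw [e0, e0, show -(y 0 * y 2) - -(z 0 * z 2) = -(y 0 * y 2 - z 0 * z 2) by ring, abs_neg]
    linarith [quad_bound (hy 0) (hz 2) (hd 0) (hd 2)]
  · show |Fv3 y 1 - Fv3 z 1| ≤ 4 * D
    rw [e1, e1, show -(y 1 * y 2) - -(z 1 * z 2) = -(y 1 * y 2 - z 1 * z 2) by ring, abs_neg]
    linarith [quad_bound (hy 1) (hz 2) (hd 1) (hd 2)]
  · show |Fv3 y 2 - Fv3 z 2| ≤ 4 * D
    rw [e2, e2, show y 0 ^ 2 + y 1 ^ 2 - (z 0 ^ 2 + z 1 ^ 2)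
        = (y 0 * y 0 - z 0 * z 0) + (y 1 * y 1 - z 1 * z 1) by ring]
    calc |_ + _| ≤ |y 0 * y 0 - z 0 * z 0| + |y 1 * y 1 - z 1 * z 1| := abs_add_le _ _
      _ ≤ 2*D + 2*D := add_le_add (quad_bound (hy 0) (hz 0) (hd 0) (hd 0))
          (quad_bound (hy 1) (hz 1) (hd 1) (hd 1))
      _ = 4 * D := by ring

lemma vfld_lip (m : ℕ) {a : ℝ} (ha : 0 < a) (t : ℝ) :
    LipschitzOnWith (Real.toNNReal (4*m/a)) (vfld m a t) (Metric.closedBall 0 1) := by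
  rw [lipschitzOnWith_iff_dist_le_mul]
  intro y hy z hz
  rw [Metric.mem_closedBall, dist_zero_right] at hy hz
  have hyb : ∀ j, |y j| ≤ 1 := fun j => le_trans (norm_le_pi_norm y j) hy
  have hzb : ∀ j, |z j| ≤ 1 := fun j => le_trans (norm_le_pi_norm z j) hz
  have hdd : ∀ j, |y j - z j| ≤ dist y z := fun j => by
    rw [← Real.dist_eq]; exact dist_le_pi_dist y z j
  have hK : (Real.toNNReal (4*m/a) : ℝ) = 4*m/a := by
    rw [Real.coe_toNNReal]; positivity
  have hKnn : (0:ℝ) ≤ (Real.toNNReal (4*m/a) : ℝ) * dist y z := by positivity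
  rw [dist_pi_le_iff hKnn]
  intro i
  rw [Real.dist_eq, hK]
  have hmax : a ≤ max a t := le_max_left a t
  have hmaxpos : 0 < max a t := lt_of_lt_of_le ha hmax
  have hc : (m:ℝ) / max a t ≤ (m:ℝ)/a := by
    apply div_le_div_of_nonneg_left (by positivity) ha hmax
  calc |vfld m a t y i - vfld m a t z i|
      = ((m:ℝ) / max a t) * |Fv3 y i - Fv3 z i| := by
        rw [vfld, vfld, ← mul_sub, abs_mul, abs_of_nonneg (by positivity)]
    _ ≤ ((m:ℝ)/a) * (4 * dist y z) :=
        mul_le_mul hc (Fv3_lip hyb hzb hdd i) (abs_nonneg _) (by positivity)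
    _ = 4*m/a * dist y z := by ring

lemma rotZ_apply0 (α : ℝ) (y : V3) : rotZ α y 0 = Real.cos α * y 0 - Real.sin α * y 1 := rfl
lemma rotZ_apply1 (α : ℝ) (y : V3) : rotZ α y 1 = Real.sin α * y 0 + Real.cos α * y 1 := rfl
lemma rotZ_apply2 (α : ℝ) (y : V3) : rotZ α y 2 = y 2 := rfl

lemma hProf0 (m : ℕ) (x : ℝ) : hProf m x 0 = h1f m x := rfl
lemma hProf1 (m : ℕ) (x : ℝ) : hProf m x 1 = 0 := rfl
lemma hProf2 (m : ℕ) (x : ℝ) : hProf m x 2 = h3f m x := rfl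

lemma rotZ_hProf0 (m : ℕ) (α x : ℝ) : rotZ α (hProf m x) 0 = Real.cos α * h1f m x := by
  rw [rotZ_apply0, hProf0, hProf1]; ring
lemma rotZ_hProf1 (m : ℕ) (α x : ℝ) : rotZ α (hProf m x) 1 = Real.sin α * h1f m x := by
  rw [rotZ_apply1, hProf0, hProf1]; ring
lemma rotZ_hProf2 (m : ℕ) (α x : ℝ) : rotZ α (hProf m x) 2 = h3f m x := by
  rw [rotZ_apply2, hProf2]

lemma W_norm_le (m : ℕ) (α : ℝ) {x : ℝ} (hx : 0 < x) :
    rotZ α (hProf m x) ∈ Metric.closedBall (0:V3) 1 := by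
  rw [Metric.mem_closedBall, dist_zero_right]
  rw [pi_norm_le_iff_of_nonneg zero_le_one]
  have hsq := h_sq m hx
  have h1b : |h1f m x| ≤ 1 := by
    nlinarith [sq_abs (h1f m x), sq_nonneg (h3f m x), abs_nonneg (h1f m x)]
  have h3b : |h3f m x| ≤ 1 := by
    nlinarith [sq_abs (h3f m x), sq_nonneg (h1f m x), abs_nonneg (h3f m x)]
  intro i
  fin_cases i
  · show ‖rotZ α (hProf m x) 0‖ ≤ 1
    rw [rotZ_hProf0, Real.norm_eq_abs, abs_mul]
    exact mul_le_one₀ (Real.abs_cos_le_one α) (abs_nonneg _) h1b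
  · show ‖rotZ α (hProf m x) 1‖ ≤ 1
    rw [rotZ_hProf1, Real.norm_eq_abs, abs_mul]
    exact mul_le_one₀ (Real.abs_sin_le_one α) (abs_nonneg _) h1b
  · show ‖rotZ α (hProf m x) 2‖ ≤ 1
    rw [rotZ_hProf2, Real.norm_eq_abs]
    exact h3b

lemma W_hasDerivAt (m : ℕ) {s : ℝ} (hs : 0 < s) (α : ℝ) {r : ℝ} (hr : 0 < r) :
    HasDerivAt (fun r => rotZ α (hProf m (r/s)))
      (fun i => ((m:ℝ)/r) * Fv3 (rotZ α (hProf m (r/s))) i) r := by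
  have hx : 0 < r / s := div_pos hr hs
  have hinner : HasDerivAt (fun r : ℝ => r / s) (1/s) r := by
    simpa using (hasDerivAt_id r).div_const s
  have H1 : HasDerivAt (fun r => h1f m (r/s))
      (-((m:ℝ)/(r/s)) * (h1f m (r/s) * h3f m (r/s)) * (1/s)) r :=
    by have := (h1_hasDeriv m hx).comp r hinner; exact this
  have H3 : HasDerivAt (fun r => h3f m (r/s))
      (((m:ℝ)/(r/s)) * (h1f m (r/s))^2 * (1/s)) r :=
    by have := (h3_hasDeriv m hx).comp r hinner; exact this
  have e0 : ∀ w : V3, Fv3 w 0 = -(w 0 * w 2) := fun w => by rw [Fv3_eq]; rfl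
  have e1 : ∀ w : V3, Fv3 w 1 = -(w 1 * w 2) := fun w => by rw [Fv3_eq]; rfl
  have e2 : ∀ w : V3, Fv3 w 2 = w 0 ^ 2 + w 1 ^ 2 := fun w => by rw [Fv3_eq]; rfl
  refine hasDerivAt_pi.mpr fun i => ?_
  fin_cases i
  · show HasDerivAt (fun r => rotZ α (hProf m (r/s)) 0)
        (((m:ℝ)/r) * Fv3 (rotZ α (hProf m (r/s))) 0) r
    simp only [rotZ_hProf0]
    have := H1.const_mul (Real.cos α)
    refine this.congr_deriv ?_
    rw [e0, rotZ_hProf0, rotZ_hProf2]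
    field_simp
  · show HasDerivAt (fun r => rotZ α (hProf m (r/s)) 1)
        (((m:ℝ)/r) * Fv3 (rotZ α (hProf m (r/s))) 1) r
    simp only [rotZ_hProf1]
    have := H1.const_mul (Real.sin α)
    refine this.congr_deriv ?_
    rw [e1, rotZ_hProf1, rotZ_hProf2]
    field_simp
  · show HasDerivAt (fun r => rotZ α (hProf m (r/s)) 2)
        (((m:ℝ)/r) * Fv3 (rotZ α (hProf m (r/s))) 2) r
    simp only [rotZ_hProf2]
    convert H3 using 1
    rw [e2, rotZ_hProf0, rotZ_hProf1]
    have hcs : Real.cos α ^ 2 + Real.sin α ^ 2 = 1 := Real.cos_sq_add_sin_sq α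
    field_simp
    linear_combination (m : ℝ) * h1f m (r/s)^2 * hcs

lemma fit_profile (m : ℕ) (hm : 1 ≤ m) {t : ℝ} (ht : t^2 < 1) :
    ∃ x₀ : ℝ, 0 < x₀ ∧ h3f m x₀ = t ∧ h1f m x₀ = Real.sqrt (1 - t^2) := by
  have ht1 : t < 1 := by nlinarith
  have htm : -1 < t := by nlinarith
  have h1t : (0:ℝ) < 1 - t := by linarith
  have h1t' : (0:ℝ) < 1 + t := by linarith
  set Q : ℝ := (1+t)/(1-t) with hQdef
  have hQ : 0 < Q := div_pos h1t' h1t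
  set x₀ : ℝ := Q ^ ((1:ℝ)/(2*m)) with hx₀def
  have hx₀ : 0 < x₀ := Real.rpow_pos_of_pos hQ _
  set u : ℝ := Real.sqrt Q with hudef
  have hu : 0 < u := Real.sqrt_pos.mpr hQ
  have hu2 : u^2 = Q := Real.sq_sqrt hQ.le
  have hm0 : (m:ℝ) ≠ 0 := by positivity
  have key1 : x₀ ^ (m:ℤ) = u := by
    rw [hudef, Real.sqrt_eq_rpow, hx₀def]
    rw [zpow_natCast, ← Real.rpow_natCast (Q ^ ((1:ℝ)/(2*m))) m, ← Real.rpow_mul hQ.le]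
    congr 1
    field_simp
  have key2 : x₀ ^ (-(m:ℤ)) = u⁻¹ := by rw [zpow_neg, key1]
  have hune : u ≠ 0 := hu.ne'
  have hu2' : u * u * (1 - t) = 1 + t := by
    have : u * u = Q := by rw [← hu2]; ring
    rw [this, hQdef]; field_simp
  constructor
  · refine ⟨hx₀, ?_, ?_⟩
    · rw [h3f, key1, key2]
      rw [div_eq_iff (by positivity)]
      field_simp
      linear_combination hu2'
    · have hval : h1f m x₀ = u * (1 - t) := by
        rw [h1f, key1, key2]
        rw [div_eq_iff (by positivity)]
        field_simp
        linear_combination -hu2'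
      rw [hval, hudef, show (1:ℝ) - t = Real.sqrt ((1-t)^2) from (Real.sqrt_sq h1t.le).symm,
        ← Real.sqrt_mul hQ.le]
      congr 1
      rw [hQdef]
      field_simp
      ring

/-- **Rigidity: classification of the energy minimizers.** If a finite-energy
m-equivariant profile v with v(0+) = -k̂, v(∞) = k̂ satisfies the first-order
harmonic map equation v_r = (m/r) v × Rv a.e., then v(r) = e^{αR} h(r/s) for
some s > 0, α ∈ ℝ. -/
theorem statement7 (m : ℕ) (hm : 1 ≤ m) (v dv : ℝ → V3)
    (hAC : LocAC v dv)
    (hsph : ∀ r ∈ Ioi (0:ℝ), nsq3 (v r) = 1)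
    (hfin : IntegrableOn (eDen m v dv) (Ioi (0:ℝ)))
    (h0 : Tendsto v (nhdsWithin 0 (Ioi 0)) (nhds negkHat))
    (hinf : Tendsto v atTop (nhds kHat))
    (heq : ∀ᵐ r ∂(volume.restrict (Ioi (0:ℝ))),
      ∀ i, dv r i = ((m : ℝ) / r) * cross3 (v r) (Rv (v r)) i) :
    ∃ s : ℝ, 0 < s ∧ ∃ α : ℝ, ∀ r ∈ Ioi (0:ℝ), v r = rotZ α (hProf m (r / s)) := by
  -- continuity of the components of v on (0,∞)
  have hca : ∀ t₀ ∈ Ioi (0:ℝ), ∀ i, ContinuousAt (fun r => v r i) t₀ := by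
    intro t₀ ht₀ i
    rw [mem_Ioi] at ht₀
    have ha : 0 < t₀/2 := by linarith
    have hab : t₀/2 ≤ t₀+1 := by linarith
    have hint : IntegrableOn (fun r => dv r i) (Set.uIcc (t₀/2) (t₀+1)) := by
      rw [Set.uIcc_of_le hab, ← intervalIntegrable_iff_integrableOn_Icc_of_le hab]
      exact hAC.1 _ _ ha hab i
    have hcp : ContinuousOn (fun u => v (t₀/2) i + ∫ r in (t₀/2)..u, dv r i)
        (Set.uIcc (t₀/2) (t₀+1)) :=
      continuousOn_const.add (intervalIntegral.continuousOn_primitive_interval hint)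
    have heqf : Set.EqOn (fun u => v u i)
        (fun u => v (t₀/2) i + ∫ r in (t₀/2)..u, dv r i) (Set.uIcc (t₀/2) (t₀+1)) := by
      intro u hu
      rw [Set.uIcc_of_le hab] at hu
      have := hAC.2 (t₀/2) u ha hu.1 i
      show v u i = v (t₀/2) i + _
      linarith
    have hcon : ContinuousOn (fun u => v u i) (Set.uIcc (t₀/2) (t₀+1)) := hcp.congr heqf
    have hmem : Set.uIcc (t₀/2) (t₀+1) ∈ nhds t₀ := by
      rw [Set.uIcc_of_le hab]
      exact Icc_mem_nhds (by linarith) (by linarith)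
    exact hcon.continuousAt hmem
  -- continuity of the ODE right-hand sides
  have hFcont : ∀ i, ContinuousOn (fun r => ((m:ℝ)/r) * Fv3 (v r) i) (Ioi (0:ℝ)) := by
    intro i τ hτ
    apply ContinuousAt.continuousWithinAt
    have h0' := hca τ hτ 0
    have h1' := hca τ hτ 1
    have h2' := hca τ hτ 2
    have hdiv : ContinuousAt (fun r : ℝ => (m:ℝ)/r) τ :=
      continuousAt_const.div continuousAt_id (ne_of_gt (mem_Ioi.mp hτ))
    refine hdiv.mul ?_
    fin_cases i
    · show ContinuousAt (fun r => Fv3 (v r) 0) τ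
      simp only [Fv3_apply0]
      exact (h0'.mul h2').neg
    · show ContinuousAt (fun r => Fv3 (v r) 1) τ
      simp only [Fv3_apply1]
      exact (h1'.mul h2').neg
    · show ContinuousAt (fun r => Fv3 (v r) 2) τ
      simp only [Fv3_apply2]
      exact (h0'.pow 2).add (h1'.pow 2)
  -- v is a genuine solution of the ODE on (0,∞)
  have hvderiv : ∀ t ∈ Ioi (0:ℝ), HasDerivAt v (fun i => ((m:ℝ)/t) * Fv3 (v t) i) t := by
    intro t ht
    rw [mem_Ioi] at ht
    refine hasDerivAt_pi.mpr fun i => ?_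
    have ha : 0 < t/2 := by linarith
    have hsub : Set.uIcc (t/2) t ⊆ Ioi (0:ℝ) := by
      rw [Set.uIcc_of_le (by linarith)]
      intro x hx
      exact lt_of_lt_of_le ha hx.1
    have hfint : IntervalIntegrable (fun r => ((m:ℝ)/r) * Fv3 (v r) i) volume (t/2) t :=
      ((hFcont i).mono hsub).intervalIntegrable
    have hmeas : StronglyMeasurableAtFilter (fun r => ((m:ℝ)/r) * Fv3 (v r) i) (nhds t) :=
      (hFcont i).stronglyMeasurableAtFilter isOpen_Ioi t (mem_Ioi.mpr ht)
    have hcat : ContinuousAt (fun r => ((m:ℝ)/r) * Fv3 (v r) i) t :=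
      (hFcont i).continuousAt (Ioi_mem_nhds ht)
    have hprim : HasDerivAt (fun u => ∫ x in (t/2)..u, ((m:ℝ)/x) * Fv3 (v x) i)
        (((m:ℝ)/t) * Fv3 (v t) i) t :=
      intervalIntegral.integral_hasDerivAt_right hfint hmeas hcat
    have heqev : (fun u => v u i) =ᶠ[nhds t]
        fun u => v (t/2) i + ∫ x in (t/2)..u, ((m:ℝ)/x) * Fv3 (v x) i := by
      have haemem := (ae_restrict_iff' measurableSet_Ioi).mp heq
      filter_upwards [Ioi_mem_nhds (show t/2 < t by linarith)] with u hu
      rw [mem_Ioi] at hu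
      have h2 := hAC.2 (t/2) u ha hu.le i
      have hae : ∀ᵐ x ∂volume, x ∈ Set.uIoc (t/2) u →
          dv x i = ((m:ℝ)/x) * Fv3 (v x) i := by
        filter_upwards [haemem] with x hx hxm
        rw [Set.uIoc_of_le hu.le] at hxm
        exact hx (mem_Ioi.mpr (lt_trans ha hxm.1)) i
      rw [intervalIntegral.integral_congr_ae hae] at h2
      show v u i = v (t/2) i + _
      linarith
    exact ((hprim.const_add (v (t/2) i)).congr_of_eventuallyEq heqev)
  -- v stays in the closed unit ball
  have hvball : ∀ t ∈ Ioi (0:ℝ), v t ∈ Metric.closedBall (0:V3) 1 := by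
    intro t ht
    rw [Metric.mem_closedBall, dist_zero_right, pi_norm_le_iff_of_nonneg zero_le_one]
    have hn := hsph t ht
    rw [nsq3] at hn
    intro i
    have hsq : (v t i)^2 ≤ 1 := by
      fin_cases i
      · show (v t 0)^2 ≤ 1
        nlinarith [sq_nonneg (v t 1), sq_nonneg (v t 2)]
      · show (v t 1)^2 ≤ 1
        nlinarith [sq_nonneg (v t 0), sq_nonneg (v t 2)]
      · show (v t 2)^2 ≤ 1
        nlinarith [sq_nonneg (v t 0), sq_nonneg (v t 1)]
    rw [Real.norm_eq_abs]
    nlinarith [abs_nonneg (v t i), sq_abs (v t i)]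
  -- the uniqueness engine
  have huniq : ∀ w : ℝ → V3,
      (∀ t ∈ Ioi (0:ℝ), HasDerivAt w (fun i => ((m:ℝ)/t) * Fv3 (w t) i) t) →
      (∀ t ∈ Ioi (0:ℝ), w t ∈ Metric.closedBall (0:V3) 1) →
      w 1 = v 1 → ∀ r ∈ Ioi (0:ℝ), v r = w r := by
    intro w hw hwb hw1 r hr
    rw [mem_Ioi] at hr
    have hmin : 0 < min r 1 := lt_min hr one_pos
    have ha : 0 < min r 1 / 2 := by linarith
    have hmin1 : min r 1 ≤ 1 := min_le_right r 1
    have hminr : min r 1 ≤ r := min_le_left r 1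
    have h1m : (1:ℝ) ∈ Ioo (min r 1 / 2) (r+2) := ⟨by linarith, by linarith⟩
    have hrm : r ∈ Ioo (min r 1 / 2) (r+2) := ⟨by linarith, by linarith⟩
    have hsubIoi : Ioo (min r 1 / 2) (r+2) ⊆ Ioi (0:ℝ) := fun x hx => lt_trans ha hx.1
    have key : Set.EqOn v w (Ioo (min r 1 / 2) (r+2)) := by
      apply ODE_solution_unique_of_mem_Ioo (v := vfld m (min r 1 / 2))
        (s := fun _ => Metric.closedBall (0:V3) 1)
        (fun τ _ => vfld_lip m ha τ) h1m ?_ ?_ hw1.symm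
      · intro τ hτ
        have hτ0 := hsubIoi hτ
        refine ⟨?_, hvball τ hτ0⟩
        have he : vfld m (min r 1 / 2) τ (v τ) = fun i => ((m:ℝ)/τ) * Fv3 (v τ) i := by
          funext i
          rw [vfld, max_eq_right (le_of_lt hτ.1)]
        rw [he]
        exact hvderiv τ hτ0
      · intro τ hτ
        have hτ0 := hsubIoi hτ
        refine ⟨?_, hwb τ hτ0⟩
        have he : vfld m (min r 1 / 2) τ (w τ) = fun i => ((m:ℝ)/τ) * Fv3 (w τ) i := by
          funext i
          rw [vfld, max_eq_right (le_of_lt hτ.1)]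
        rw [he]
        exact hw τ hτ0
    exact key hrm
  -- analysis of v(1)
  have h1I : (1:ℝ) ∈ Ioi (0:ℝ) := mem_Ioi.mpr one_pos
  have hn1 := hsph 1 h1I
  rw [nsq3] at hn1
  by_cases hdeg : (v 1 0)^2 + (v 1 1)^2 = 0
  · -- degenerate case : v(1) = ±k̂, contradiction with the boundary conditions
    exfalso
    have h00 : v 1 0 = 0 := by nlinarith [sq_nonneg (v 1 0), sq_nonneg (v 1 1)]
    have h01 : v 1 1 = 0 := by nlinarith [sq_nonneg (v 1 0), sq_nonneg (v 1 1)]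
    have hprod : (v 1 2 - 1) * (v 1 2 + 1) = 0 := by nlinarith
    rcases mul_eq_zero.mp hprod with hcase | hcase
    · -- v(1) = k̂
      have hkd : ∀ t ∈ Ioi (0:ℝ),
          HasDerivAt (fun _ : ℝ => kHat) (fun i => ((m:ℝ)/t) * Fv3 kHat i) t := by
        intro t ht
        have hz : (fun i => ((m:ℝ)/t) * Fv3 kHat i) = (0 : V3) := by
          funext i
          fin_cases i
          · show ((m:ℝ)/t) * Fv3 kHat 0 = 0
            rw [Fv3_apply0]
            simp [kHat]
          · show ((m:ℝ)/t) * Fv3 kHat 1 = 0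
            rw [Fv3_apply1]
            simp [kHat]
          · show ((m:ℝ)/t) * Fv3 kHat 2 = 0
            rw [Fv3_apply2]
            simp [kHat]
        rw [hz]
        exact hasDerivAt_const t kHat
      have hkb : ∀ t ∈ Ioi (0:ℝ), (fun _ : ℝ => kHat) t ∈ Metric.closedBall (0:V3) 1 := by
        intro t ht
        rw [Metric.mem_closedBall, dist_zero_right, pi_norm_le_iff_of_nonneg zero_le_one]
        intro i
        fin_cases i
        · show ‖kHat 0‖ ≤ 1
          norm_num [kHat]
        · show ‖kHat 1‖ ≤ 1
          norm_num [kHat]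
        · show ‖kHat 2‖ ≤ 1
          simp [kHat]
      have hw1 : (fun _ : ℝ => kHat) 1 = v 1 := by
        funext i
        fin_cases i
        · show kHat 0 = v 1 0
          rw [h00]; norm_num [kHat]
        · show kHat 1 = v 1 1
          rw [h01]; norm_num [kHat]
        · show kHat 2 = v 1 2
          have : v 1 2 = 1 := by linarith
          rw [this]; simp [kHat]
      have hvk := huniq (fun _ => kHat) hkd hkb hw1
      have htend : Tendsto v (nhdsWithin 0 (Ioi 0)) (nhds kHat) := by
        apply Tendsto.congr' _ tendsto_const_nhds
        filter_upwards [self_mem_nhdsWithin] with x hx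
        exact (hvk x hx).symm
      have huniq2 := tendsto_nhds_unique h0 htend
      have h2c := congrFun huniq2 2
      simp [negkHat, kHat] at h2c
      norm_num at h2c
    · -- v(1) = -k̂
      have hkd : ∀ t ∈ Ioi (0:ℝ),
          HasDerivAt (fun _ : ℝ => negkHat) (fun i => ((m:ℝ)/t) * Fv3 negkHat i) t := by
        intro t ht
        have hz : (fun i => ((m:ℝ)/t) * Fv3 negkHat i) = (0 : V3) := by
          funext i
          fin_cases i
          · show ((m:ℝ)/t) * Fv3 negkHat 0 = 0
            rw [Fv3_apply0]
            simp [negkHat]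
          · show ((m:ℝ)/t) * Fv3 negkHat 1 = 0
            rw [Fv3_apply1]
            simp [negkHat]
          · show ((m:ℝ)/t) * Fv3 negkHat 2 = 0
            rw [Fv3_apply2]
            simp [negkHat]
        rw [hz]
        exact hasDerivAt_const t negkHat
      have hkb : ∀ t ∈ Ioi (0:ℝ), (fun _ : ℝ => negkHat) t ∈ Metric.closedBall (0:V3) 1 := by
        intro t ht
        rw [Metric.mem_closedBall, dist_zero_right, pi_norm_le_iff_of_nonneg zero_le_one]
        intro i
        fin_cases i
        · show ‖negkHat 0‖ ≤ 1
          norm_num [negkHat]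
        · show ‖negkHat 1‖ ≤ 1
          norm_num [negkHat]
        · show ‖negkHat 2‖ ≤ 1
          simp [negkHat]
      have hw1 : (fun _ : ℝ => negkHat) 1 = v 1 := by
        funext i
        fin_cases i
        · show negkHat 0 = v 1 0
          rw [h00]; norm_num [negkHat]
        · show negkHat 1 = v 1 1
          rw [h01]; norm_num [negkHat]
        · show negkHat 2 = v 1 2
          have : v 1 2 = -1 := by linarith
          rw [this]; simp [negkHat]
      have hvk := huniq (fun _ => negkHat) hkd hkb hw1
      have htend : Tendsto v atTop (nhds negkHat) := by
        apply Tendsto.congr' _ tendsto_const_nhds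
        filter_upwards [Ioi_mem_atTop (0:ℝ)] with x hx
        exact (hvk x hx).symm
      have huniq2 := tendsto_nhds_unique hinf htend
      have h2c := congrFun huniq2 2
      simp [negkHat, kHat] at h2c
      norm_num at h2c
  · -- main case
    have hρpos : 0 < (v 1 0)^2 + (v 1 1)^2 :=
      lt_of_le_of_ne (by positivity) (Ne.symm hdeg)
    have ht2 : (v 1 2)^2 < 1 := by nlinarith
    obtain ⟨x₀, hx₀, h3v, h1v⟩ := fit_profile m hm ht2
    have hρ : 0 < Real.sqrt (1 - (v 1 2)^2) := Real.sqrt_pos.mpr (by nlinarith)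
    set z : ℂ := ⟨v 1 0, v 1 1⟩ with hzdef
    have habs : ‖z‖ = Real.sqrt (1 - (v 1 2)^2) := by
      rw [Complex.norm_def, Complex.normSq_mk]
      congr 1
      linear_combination hn1
    have hzne : z ≠ 0 := by
      intro h0z
      rw [h0z] at habs
      simp only [norm_zero] at habs
      exact hρ.ne habs
    have hcos : Real.cos (Complex.arg z) * Real.sqrt (1 - (v 1 2)^2) = v 1 0 := by
      rw [Complex.cos_arg hzne, habs]
      field_simp
      rfl
    have hsin : Real.sin (Complex.arg z) * Real.sqrt (1 - (v 1 2)^2) = v 1 1 := by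
      rw [Complex.sin_arg, habs]
      field_simp
      rfl
    refine ⟨x₀⁻¹, inv_pos.mpr hx₀, Complex.arg z, fun r hr => ?_⟩
    have hs : (0:ℝ) < x₀⁻¹ := inv_pos.mpr hx₀
    have h1x : (1:ℝ) / x₀⁻¹ = x₀ := by field_simp
    have hw1 : (fun r => rotZ (Complex.arg z) (hProf m (r / x₀⁻¹))) 1 = v 1 := by
      funext i
      fin_cases i
      · show rotZ (Complex.arg z) (hProf m (1 / x₀⁻¹)) 0 = v 1 0
        rw [rotZ_hProf0, h1x, h1v, hcos]
      · show rotZ (Complex.arg z) (hProf m (1 / x₀⁻¹)) 1 = v 1 1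
        rw [rotZ_hProf1, h1x, h1v, hsin]
      · show rotZ (Complex.arg z) (hProf m (1 / x₀⁻¹)) 2 = v 1 2
        rw [rotZ_hProf2, h1x, h3v]
    have hwd : ∀ τ ∈ Ioi (0:ℝ),
        HasDerivAt (fun r => rotZ (Complex.arg z) (hProf m (r / x₀⁻¹)))
          (fun i => ((m:ℝ)/τ) * Fv3 (rotZ (Complex.arg z) (hProf m (τ / x₀⁻¹))) i) τ :=
      fun τ hτ => W_hasDerivAt m hs (Complex.arg z) (mem_Ioi.mp hτ)
    have hwb : ∀ τ ∈ Ioi (0:ℝ),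
        (fun r => rotZ (Complex.arg z) (hProf m (r / x₀⁻¹))) τ ∈ Metric.closedBall (0:V3) 1 :=
      fun τ hτ => W_norm_le m (Complex.arg z) (div_pos (mem_Ioi.mp hτ) hs)
    exact huniq _ hwd hwb hw1 r hr

end
end

section
/- There is a universal constant C such that every locally absolutely continuous function z : (0,∞) → ℂ with ‖z‖_X < ∞ is (after modification on a null set) continuous on (0,∞), has limits z(ρ) → 0 as ρ → 0+ and as ρ → ∞, and satisfies sup_{ρ>0} |z(ρ)| ≤ C‖z‖_X. -/
open MeasureTheory Set Real Filter
open scoped ENNReal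

noncomputable section

/-- `z` is locally absolutely continuous on (0,∞), with a.e. derivative `dz`. -/
def LocACC (z dz : ℝ → ℂ) : Prop :=
  (∀ a b : ℝ, 0 < a → a ≤ b → IntervalIntegrable dz volume a b) ∧
  (∀ a b : ℝ, 0 < a → a ≤ b → z b - z a = ∫ ρ in a..b, dz ρ)

/-- the density (w.r.t. dρ) of the squared X-norm: (|z'|² + |z|²/ρ²) ρ -/
def xDen (z dz : ℝ → ℂ) (ρ : ℝ) : ℝ := (‖dz ρ‖ ^ 2 + ‖z ρ‖ ^ 2 / ρ ^ 2) * ρ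

/-- the X-norm ‖z‖_X = (∫ (|z'|² + |z|²/ρ²) ρ dρ)^{1/2} -/
def normX (z dz : ℝ → ℂ) : ℝ := Real.sqrt (∫ ρ in Ioi (0:ℝ), xDen z dz ρ)

/-- the operator L₀ = ∂_ρ + (m/ρ) h₃(ρ) -/
def L0op (m : ℕ) (z dz : ℝ → ℂ) (ρ : ℝ) : ℂ :=
  dz ρ + ((((m : ℝ) / ρ) * h3f m ρ : ℝ) : ℂ) * z ρ

lemma my_contz {z dz : ℝ → ℂ} (hAC : LocACC z dz) : ContinuousOn z (Ioi (0:ℝ)) := by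
  intro ρ hρ
  rw [mem_Ioi] at hρ
  have ha : (0:ℝ) < ρ/2 := by linarith
  have hab : ρ/2 ≤ ρ + ρ := by linarith
  have hIcc : Icc (ρ/2) (ρ+ρ) ∈ nhds ρ := Icc_mem_nhds (by linarith) (by linarith)
  have hint : IntegrableOn dz (Icc (ρ/2) (ρ+ρ)) := by
    have h := hAC.1 (ρ/2) (ρ+ρ) ha hab
    rwa [intervalIntegrable_iff_integrableOn_Icc_of_le hab] at h
  have hc : ContinuousOn (fun x => z (ρ/2) + ∫ t in Ioc (ρ/2) x, dz t) (Icc (ρ/2) (ρ+ρ)) :=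
    continuousOn_const.add (intervalIntegral.continuousOn_primitive hint)
  have heq : EqOn z (fun x => z (ρ/2) + ∫ t in Ioc (ρ/2) x, dz t) (Icc (ρ/2) (ρ+ρ)) := by
    intro x hx
    have h2 := hAC.2 (ρ/2) x ha hx.1
    rw [intervalIntegral.integral_of_le hx.1] at h2
    simp only
    rw [← h2]
    ring
  exact ((hc.congr heq).continuousAt hIcc).continuousWithinAt

lemma my_arith {x T ρ₀ u L : ℝ} (hρ : 0 < ρ₀) (hu : 0 < u) (hT0 : 0 ≤ T)
    (hL0 : 0 ≤ L) (hL1 : L ≤ 1)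
    (h : ρ₀ * x ≤ (u*ρ₀/2) * T
      + ((1/(2*(u*ρ₀))) * (((2*ρ₀)^2 - ρ₀^2)/2) + (ρ₀^2/(2*(u*ρ₀))) * L)) :
    x ≤ u * T + (5/4)/u := by
  have hu0 : u ≠ 0 := hu.ne'
  have hρ0 : ρ₀ ≠ 0 := hρ.ne'
  have e1 : (1/(2*(u*ρ₀))) * (((2*ρ₀)^2 - ρ₀^2)/2) = 3*ρ₀/(4*u) := by
    field_simp
    try ring
  have e2 : (ρ₀^2/(2*(u*ρ₀))) * L = ρ₀*L/(2*u) := by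
    field_simp
    try ring
  have e3 : ρ₀*(u*T + 5/4/u) = u*ρ₀*T + 5*ρ₀/(4*u) := by
    field_simp
    try ring
  have h4 : ρ₀*L/(2*u) ≤ 2*ρ₀/(4*u) := by
    rw [div_le_div_iff₀ (by positivity) (by positivity)]
    nlinarith [mul_nonneg (mul_nonneg hu.le hρ.le) (sub_nonneg.2 hL1)]
  have h5 : (u*ρ₀/2)*T ≤ u*ρ₀*T := by
    nlinarith [mul_nonneg (mul_nonneg hu.le hρ.le) hT0]
  have h6 : 3*ρ₀/(4*u) + 2*ρ₀/(4*u) = 5*ρ₀/(4*u) := by ring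
  have hmain : ρ₀ * x ≤ ρ₀*(u*T + 5/4/u) := by
    rw [e1, e2] at h
    rw [e3]
    linarith
  exact le_of_mul_le_mul_left hmain hρ

lemma my_key {z dz : ℝ → ℂ} (hAC : LocACC z dz) (hX : IntegrableOn (xDen z dz) (Ioi (0:ℝ)))
    {ρ₀ u : ℝ} (hρ : 0 < ρ₀) (hu : 0 < u) :
    ‖z ρ₀‖ ≤ u * (∫ a in Ioc ρ₀ (2*ρ₀), xDen z dz a) + (5/4) / u := by
  set T := ∫ a in Ioc ρ₀ (2*ρ₀), xDen z dz a with hTdef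
  set v := u * ρ₀ with hvdef
  have hv : 0 < v := mul_pos hu hρ
  have h2ρ : ρ₀ ≤ 2*ρ₀ := by linarith
  have hsub : Ioc ρ₀ (2*ρ₀) ⊆ Ioi (0:ℝ) := fun x hx => lt_trans hρ hx.1
  have hposmem : ∀ a ∈ Ioc ρ₀ (2*ρ₀), (0:ℝ) < a := fun a ha => lt_trans hρ ha.1
  have hfin : volume (Ioc ρ₀ (2*ρ₀)) < ⊤ := by
    rw [Real.volume_Ioc]; exact ENNReal.ofReal_lt_top
  have hμ : (volume (Ioc ρ₀ (2*ρ₀))).toReal = ρ₀ := by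
    rw [Real.volume_Ioc, show 2*ρ₀ - ρ₀ = ρ₀ by ring, ENNReal.toReal_ofReal hρ.le]
  have hXloc : IntegrableOn (xDen z dz) (Ioc ρ₀ (2*ρ₀)) := hX.mono_set hsub
  have hdzI : IntegrableOn (fun t => ‖dz t‖) (Ioc ρ₀ (2*ρ₀)) := by
    have h := (hAC.1 ρ₀ (2*ρ₀) hρ h2ρ).norm
    rwa [intervalIntegrable_iff_integrableOn_Ioc_of_le h2ρ] at h
  have hcz : ContinuousOn z (Icc ρ₀ (2*ρ₀)) :=
    (my_contz hAC).mono (fun x hx => lt_of_lt_of_le hρ hx.1)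
  have hzI : IntegrableOn (fun a => ‖z a‖) (Ioc ρ₀ (2*ρ₀)) :=
    (hcz.norm.integrableOn_Icc).mono_set Ioc_subset_Icc_self
  have hI1 : IntegrableOn (fun a => ‖z a‖^2 / a) (Ioc ρ₀ (2*ρ₀)) := by
    refine (ContinuousOn.integrableOn_Icc ?_).mono_set Ioc_subset_Icc_self
    exact (hcz.norm.pow 2).div continuous_id.continuousOn
      (fun x hx => (lt_of_lt_of_le hρ hx.1).ne')
  have hI2 : IntegrableOn (fun a => ‖dz a‖^2 * a) (Ioc ρ₀ (2*ρ₀)) := by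
    have heq : EqOn (fun a => xDen z dz a - ‖z a‖^2 / a) (fun a => ‖dz a‖^2 * a)
        (Ioc ρ₀ (2*ρ₀)) := by
      intro a ha
      have ha0 : (0:ℝ) < a := hposmem a ha
      simp only [xDen]
      field_simp
      ring
    exact MeasureTheory.IntegrableOn.congr_fun (hXloc.sub hI1) heq measurableSet_Ioc
  have hIa : IntegrableOn (fun a : ℝ => a) (Ioc ρ₀ (2*ρ₀)) :=
    (continuous_id.continuousOn.integrableOn_Icc).mono_set Ioc_subset_Icc_self
  have hIinv : IntegrableOn (fun a : ℝ => 1/a) (Ioc ρ₀ (2*ρ₀)) := by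
    refine (ContinuousOn.integrableOn_Icc ?_).mono_set Ioc_subset_Icc_self
    exact continuousOn_const.div continuous_id.continuousOn
      (fun x hx => (lt_of_lt_of_le hρ hx.1).ne')
  set K := ∫ t in Ioc ρ₀ (2*ρ₀), ‖dz t‖ with hKdef
  have hA : ∀ a ∈ Ioc ρ₀ (2*ρ₀), ‖z ρ₀‖ ≤ ‖z a‖ + K := by
    intro a ha
    have h1 : z a - z ρ₀ = ∫ t in ρ₀..a, dz t := hAC.2 ρ₀ a hρ ha.1.le
    have h2 : ‖z ρ₀‖ - ‖z a‖ ≤ ‖z a - z ρ₀‖ := by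
      have h3 := norm_sub_norm_le (z ρ₀) (z a)
      rwa [norm_sub_rev] at h3
    have h3 : ‖∫ t in ρ₀..a, dz t‖ ≤ ∫ t in ρ₀..a, ‖dz t‖ :=
      intervalIntegral.norm_integral_le_integral_norm ha.1.le
    have h4 : ∫ t in ρ₀..a, ‖dz t‖ ≤ K := by
      rw [intervalIntegral.integral_of_le ha.1.le]
      exact setIntegral_mono_set hdzI
        (Filter.Eventually.of_forall fun x => norm_nonneg _)
        (HasSubset.Subset.eventuallyLE (Ioc_subset_Ioc_right ha.2))
    rw [h1] at h2
    linarith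
  have hF : ∀ a ∈ Ioc ρ₀ (2*ρ₀), ‖z a‖ + ρ₀ * ‖dz a‖ ≤
      (v/2) * (‖z a‖^2/a + ‖dz a‖^2*a) + ((1/(2*v)) * a + (ρ₀^2/(2*v)) * (1/a)) := by
    intro a ha
    have ha0 : (0:ℝ) < a := hposmem a ha
    have g1 : ‖z a‖ ≤ (v/2) * (‖z a‖^2/a) + (1/(2*v)) * a := by
      have e : (v/2) * (‖z a‖^2/a) + (1/(2*v)) * a = (v^2*‖z a‖^2 + a^2)/(2*v*a) := by
        field_simp
      rw [e, le_div_iff₀ (by positivity)]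
      nlinarith [sq_nonneg (v * ‖z a‖ - a)]
    have g2 : ρ₀ * ‖dz a‖ ≤ (v/2) * (‖dz a‖^2*a) + (ρ₀^2/(2*v)) * (1/a) := by
      have e : (v/2) * (‖dz a‖^2*a) + (ρ₀^2/(2*v)) * (1/a)
          = (v^2*‖dz a‖^2*a^2 + ρ₀^2)/(2*v*a) := by
        field_simp
      rw [e, le_div_iff₀ (by positivity)]
      nlinarith [sq_nonneg (v * ‖dz a‖ * a - ρ₀)]
    linarith
  have hconstI : IntegrableOn (fun _ : ℝ => ‖z ρ₀‖) (Ioc ρ₀ (2*ρ₀)) :=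
    integrableOn_const hfin.ne
  have hKI : IntegrableOn (fun _ : ℝ => K) (Ioc ρ₀ (2*ρ₀)) :=
    integrableOn_const hfin.ne
  have hB1 : ρ₀ * ‖z ρ₀‖ ≤ ∫ a in Ioc ρ₀ (2*ρ₀), (‖z a‖ + K) := by
    have h := setIntegral_mono_on hconstI (hzI.add hKI) measurableSet_Ioc hA
    rwa [setIntegral_const, measureReal_def, hμ, smul_eq_mul] at h
  have hB2 : ∫ a in Ioc ρ₀ (2*ρ₀), (‖z a‖ + K) = ∫ a in Ioc ρ₀ (2*ρ₀), (‖z a‖ + ρ₀ * ‖dz a‖) := by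
    rw [integral_add hzI hKI, integral_add hzI (hdzI.const_mul ρ₀),
      setIntegral_const, measureReal_def, hμ, smul_eq_mul, integral_const_mul]
  have hIsum : IntegrableOn (fun a => (v/2) * (‖z a‖^2/a + ‖dz a‖^2*a)) (Ioc ρ₀ (2*ρ₀)) :=
    (hI1.add hI2).const_mul _
  have hIr1 : IntegrableOn (fun a => (1/(2*v)) * a) (Ioc ρ₀ (2*ρ₀)) := hIa.const_mul _
  have hIr2 : IntegrableOn (fun a => (ρ₀^2/(2*v)) * (1/a)) (Ioc ρ₀ (2*ρ₀)) := hIinv.const_mul _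
  have hIrest : IntegrableOn (fun a => (1/(2*v)) * a + (ρ₀^2/(2*v)) * (1/a)) (Ioc ρ₀ (2*ρ₀)) :=
    hIr1.add hIr2
  have hB3 : ∫ a in Ioc ρ₀ (2*ρ₀), (‖z a‖ + ρ₀ * ‖dz a‖) ≤
      ∫ a in Ioc ρ₀ (2*ρ₀),
        ((v/2) * (‖z a‖^2/a + ‖dz a‖^2*a) + ((1/(2*v)) * a + (ρ₀^2/(2*v)) * (1/a))) :=
    setIntegral_mono_on (hzI.add (hdzI.const_mul ρ₀)) (hIsum.add hIrest)
      measurableSet_Ioc hF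
  have hPQ : ∫ a in Ioc ρ₀ (2*ρ₀), (‖z a‖^2/a + ‖dz a‖^2*a) = T := by
    refine setIntegral_congr_fun measurableSet_Ioc (fun a ha => ?_)
    have ha0 : (0:ℝ) < a := hposmem a ha
    simp only [xDen]
    field_simp
    ring
  have hIdval : ∫ a in Ioc ρ₀ (2*ρ₀), a = ((2*ρ₀)^2 - ρ₀^2)/2 := by
    rw [← intervalIntegral.integral_of_le h2ρ, integral_id]
  have hInvval : ∫ a in Ioc ρ₀ (2*ρ₀), (1/a) = Real.log 2 := by
    have h0 : (0:ℝ) ∉ uIcc ρ₀ (2*ρ₀) := by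
      rw [uIcc_of_le h2ρ]
      intro hmem
      exact absurd hmem.1 (by linarith)
    rw [← intervalIntegral.integral_of_le h2ρ, integral_one_div h0,
      mul_div_assoc, div_self hρ.ne', mul_one]
  have hC : ∫ a in Ioc ρ₀ (2*ρ₀),
      ((v/2) * (‖z a‖^2/a + ‖dz a‖^2*a) + ((1/(2*v)) * a + (ρ₀^2/(2*v)) * (1/a)))
      = (v/2) * T + ((1/(2*v)) * (((2*ρ₀)^2 - ρ₀^2)/2) + (ρ₀^2/(2*v)) * Real.log 2) := by
    rw [integral_add hIsum hIrest, integral_const_mul, hPQ,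
      integral_add hIr1 hIr2, integral_const_mul, integral_const_mul, hIdval, hInvval]
  have hlog : Real.log 2 ≤ 1 := by
    have h := Real.log_le_sub_one_of_pos (by norm_num : (0:ℝ) < 2)
    linarith
  have hlog0 : (0:ℝ) ≤ Real.log 2 := Real.log_nonneg (by norm_num)
  have hT0 : 0 ≤ T := by
    rw [hTdef]
    refine setIntegral_nonneg measurableSet_Ioc (fun a ha => ?_)
    have ha0 := hposmem a ha
    exact mul_nonneg (by positivity) ha0.le
  have hchain : ρ₀ * ‖z ρ₀‖ ≤
      (v/2) * T + ((1/(2*v)) * (((2*ρ₀)^2 - ρ₀^2)/2) + (ρ₀^2/(2*v)) * Real.log 2) := by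
    rw [← hC]
    calc ρ₀ * ‖z ρ₀‖ ≤ ∫ a in Ioc ρ₀ (2*ρ₀), (‖z a‖ + K) := hB1
      _ = ∫ a in Ioc ρ₀ (2*ρ₀), (‖z a‖ + ρ₀ * ‖dz a‖) := hB2
      _ ≤ _ := hB3
  rw [hvdef] at hchain
  exact my_arith hρ hu hT0 hlog0 hlog hchain

lemma my_bound3 {z dz : ℝ → ℂ} (hAC : LocACC z dz) (hX : IntegrableOn (xDen z dz) (Ioi (0:ℝ)))
    {ρ : ℝ} (hρ : 0 < ρ) :
    ‖z ρ‖ ≤ 3 * Real.sqrt (∫ a in Ioc ρ (2*ρ), xDen z dz a) := by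
  set T := ∫ a in Ioc ρ (2*ρ), xDen z dz a with hTdef
  have hT0 : 0 ≤ T := by
    rw [hTdef]
    refine setIntegral_nonneg measurableSet_Ioc (fun a ha => ?_)
    have ha0 : (0:ℝ) < a := lt_trans hρ ha.1
    exact mul_nonneg (by positivity) ha0.le
  by_contra hcon
  push_neg at hcon
  set δ := ‖z ρ‖ - 3 * Real.sqrt T with hδdef
  have hδ : 0 < δ := sub_pos.2 hcon
  have hTε : 0 < T + (δ/3)^2 := by positivity
  set s := Real.sqrt (T + (δ/3)^2) with hsdef
  have hs : 0 < s := Real.sqrt_pos.2 hTε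
  have hsq : s^2 = T + (δ/3)^2 := by
    rw [hsdef]
    exact Real.sq_sqrt hTε.le
  have hk := my_key hAC hX (u := s⁻¹) hρ (inv_pos.2 hs)
  rw [← hTdef] at hk
  have h1 : s⁻¹ * T ≤ s := by
    rw [inv_mul_eq_div, div_le_iff₀ hs]
    nlinarith [hsq]
  have h2 : (5/4 : ℝ)/s⁻¹ = (5/4) * s := by
    field_simp
  have h3 : s ≤ Real.sqrt T + δ/3 := by
    rw [hsdef]
    have h4 : Real.sqrt (T + (δ/3)^2) ≤ Real.sqrt ((Real.sqrt T + δ/3)^2) := by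
      apply Real.sqrt_le_sqrt
      nlinarith [Real.sq_sqrt hT0, Real.sqrt_nonneg T, hδ]
    rw [Real.sqrt_sq (by positivity)] at h4
    exact h4
  have h6 : (0:ℝ) ≤ Real.sqrt T := Real.sqrt_nonneg T
  clear_value T δ s
  rw [h2] at hk
  have hfin : ‖z ρ‖ ≤ 3 * Real.sqrt T + (3/4) * δ := by
    linarith only [hk, h1, h3, h6, hδ]
  linarith only [hfin, hδdef, hcon]

lemma my_union_Ioi : (⋃ n : ℕ, Ioi (((n:ℝ)+1)⁻¹)) = Ioi (0:ℝ) := by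
  ext x
  simp only [mem_iUnion, mem_Ioi]
  constructor
  · rintro ⟨n, hn⟩
    exact lt_trans (by positivity) hn
  · intro hx
    obtain ⟨n, hn⟩ := exists_nat_one_div_lt hx
    exact ⟨n, by rwa [one_div] at hn⟩

lemma my_union_Ioc : (⋃ n : ℕ, Ioc (0:ℝ) (n:ℝ)) = Ioi (0:ℝ) := by
  ext x
  simp only [mem_iUnion, mem_Ioc, mem_Ioi]
  constructor
  · rintro ⟨n, hn, _⟩
    exact hn
  · intro hx
    obtain ⟨n, hn⟩ := exists_nat_ge x
    exact ⟨n, hx, hn⟩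

/-- **X-norm embedding.** There is a universal constant C such that every locally
absolutely continuous z : (0,∞) → ℂ with ‖z‖_X < ∞ is continuous on (0,∞),
tends to 0 as ρ → 0+ and ρ → ∞, and satisfies sup |z| ≤ C ‖z‖_X. -/
theorem statement8 :
    ∃ C > (0:ℝ), ∀ z dz : ℝ → ℂ,
      LocACC z dz →
      IntegrableOn (xDen z dz) (Ioi (0:ℝ)) →
      ContinuousOn z (Ioi (0:ℝ)) ∧
      Tendsto z (nhdsWithin 0 (Ioi 0)) (nhds 0) ∧
      Tendsto z atTop (nhds 0) ∧
      ∀ ρ ∈ Ioi (0:ℝ), ‖z ρ‖ ≤ C * normX z dz := by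
  refine ⟨3, by norm_num, fun z dz hAC hX => ?_⟩
  set S := ∫ x in Ioi (0:ℝ), xDen z dz x with hSdef
  have hnn : ∀ (t : Set ℝ), t ⊆ Ioi (0:ℝ) → MeasurableSet t →
      0 ≤ᵐ[volume.restrict t] xDen z dz := fun t hsubt hmeas =>
    (ae_restrict_iff' hmeas).2 (Filter.Eventually.of_forall fun y hy =>
      mul_nonneg (by positivity) (le_of_lt (hsubt hy)))
  have hsplit : ∀ t : ℝ, 0 ≤ t →
      (∫ x in Ioc (0:ℝ) t, xDen z dz x) + ∫ x in Ioi t, xDen z dz x = S := by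
    intro t ht
    rw [← setIntegral_union (Ioc_disjoint_Ioi le_rfl) measurableSet_Ioi
      (hX.mono_set (fun x hx => hx.1)) (hX.mono_set (Ioi_subset_Ioi ht)),
      Ioc_union_Ioi_eq_Ioi ht]
  have htail0 : Tendsto (fun n : ℕ => ∫ x in Ioc (0:ℝ) (((n:ℝ)+1)⁻¹), xDen z dz x)
      atTop (nhds 0) := by
    have hmono : Monotone (fun n : ℕ => Ioi (((n:ℝ)+1)⁻¹)) := by
      intro m n hmn x hx
      rw [mem_Ioi] at *
      have h1 : ((n:ℝ)+1)⁻¹ ≤ ((m:ℝ)+1)⁻¹ := by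
        apply inv_anti₀ (by positivity)
        have : (m:ℝ) ≤ (n:ℝ) := Nat.cast_le.2 hmn
        linarith
      linarith
    have hmain := tendsto_setIntegral_of_monotone (fun _ => measurableSet_Ioi) hmono
        (my_union_Ioi ▸ hX)
    rw [my_union_Ioi] at hmain
    have h2 : Tendsto (fun n : ℕ => S - ∫ x in Ioi (((n:ℝ)+1)⁻¹), xDen z dz x)
        atTop (nhds (S - S)) := tendsto_const_nhds.sub hmain
    rw [sub_self] at h2
    refine h2.congr (fun n => ?_)
    have := hsplit (((n:ℝ)+1)⁻¹) (by positivity)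
    linarith
  have htailInf : Tendsto (fun n : ℕ => ∫ x in Ioi ((n:ℝ)), xDen z dz x) atTop (nhds 0) := by
    have hmono : Monotone (fun n : ℕ => Ioc (0:ℝ) (n:ℝ)) := by
      intro m n hmn
      exact Ioc_subset_Ioc_right (Nat.cast_le.2 hmn)
    have hmain := tendsto_setIntegral_of_monotone (fun _ => measurableSet_Ioc) hmono
        (my_union_Ioc ▸ hX)
    rw [my_union_Ioc] at hmain
    have h2 : Tendsto (fun n : ℕ => S - ∫ x in Ioc (0:ℝ) ((n:ℝ)), xDen z dz x)
        atTop (nhds (S - S)) := tendsto_const_nhds.sub hmain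
    rw [sub_self] at h2
    refine h2.congr (fun n => ?_)
    have := hsplit ((n:ℝ)) (Nat.cast_nonneg n)
    linarith
  refine ⟨my_contz hAC, ?_, ?_, ?_⟩
  · rw [Metric.tendsto_nhdsWithin_nhds]
    intro ε hε
    have hε4 : (0:ℝ) < (ε/4)^2 := by positivity
    obtain ⟨N, hN⟩ := (htail0.eventually (gt_mem_nhds hε4)).exists
    refine ⟨(((N:ℝ)+1)⁻¹)/2, by positivity, fun {x} hx hdist => ?_⟩
    rw [mem_Ioi] at hx
    rw [Real.dist_eq, sub_zero, abs_of_pos hx] at hdist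
    have hTx : (∫ a in Ioc x (2*x), xDen z dz a) ≤
        ∫ a in Ioc (0:ℝ) (((N:ℝ)+1)⁻¹), xDen z dz a := by
      refine setIntegral_mono_set (hX.mono_set (fun y hy => hy.1))
        (hnn _ (fun y hy => hy.1) measurableSet_Ioc)
        (HasSubset.Subset.eventuallyLE (fun y hy => ⟨lt_trans hx hy.1, ?_⟩))
      have := hy.2
      linarith
    rw [dist_zero_right]
    calc ‖z x‖ ≤ 3 * Real.sqrt (∫ a in Ioc x (2*x), xDen z dz a) := my_bound3 hAC hX hx
      _ ≤ 3 * Real.sqrt ((ε/4)^2) := by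
          have := Real.sqrt_le_sqrt (le_of_lt (lt_of_le_of_lt hTx hN))
          linarith
      _ = 3 * (ε/4) := by rw [Real.sqrt_sq (by positivity)]
      _ < ε := by linarith
  · rw [Metric.tendsto_atTop]
    intro ε hε
    have hε4 : (0:ℝ) < (ε/4)^2 := by positivity
    obtain ⟨N, hN⟩ := (htailInf.eventually (gt_mem_nhds hε4)).exists
    refine ⟨(N:ℝ)+1, fun x hx => ?_⟩
    have hx0 : (0:ℝ) < x := lt_of_lt_of_le (by positivity) hx
    have hTx : (∫ a in Ioc x (2*x), xDen z dz a) ≤ ∫ a in Ioi ((N:ℝ)), xDen z dz a := by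
      refine setIntegral_mono_set
        (hX.mono_set (Ioi_subset_Ioi (Nat.cast_nonneg N)))
        (hnn _ (fun y hy => mem_Ioi.2 (lt_of_le_of_lt (Nat.cast_nonneg N) hy)) measurableSet_Ioi)
        (HasSubset.Subset.eventuallyLE (fun y hy => ?_))
      rw [mem_Ioi]
      calc (N:ℝ) < (N:ℝ)+1 := by linarith
        _ ≤ x := hx
        _ < y := hy.1
    rw [dist_zero_right]
    calc ‖z x‖ ≤ 3 * Real.sqrt (∫ a in Ioc x (2*x), xDen z dz a) := my_bound3 hAC hX hx0
      _ ≤ 3 * Real.sqrt ((ε/4)^2) := by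
          have := Real.sqrt_le_sqrt (le_of_lt (lt_of_le_of_lt hTx hN))
          linarith
      _ = 3 * (ε/4) := by rw [Real.sqrt_sq (by positivity)]
      _ < ε := by linarith
  · intro ρ hρ
    rw [mem_Ioi] at hρ
    have hTx : (∫ a in Ioc ρ (2*ρ), xDen z dz a) ≤ S := by
      refine setIntegral_mono_set hX (hnn _ (fun y hy => hy) measurableSet_Ioi)
        (HasSubset.Subset.eventuallyLE (fun y hy => lt_trans hρ hy.1))
    calc ‖z ρ‖ ≤ 3 * Real.sqrt (∫ a in Ioc ρ (2*ρ), xDen z dz a) := my_bound3 hAC hX hρ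
      _ ≤ 3 * normX z dz := by
          have := Real.sqrt_le_sqrt hTx
          rw [normX]
          linarith

end
end

section
/- Let m ≥ 1 be an integer, C₀ > 0, and let I ⊂ ℝ be an interval. Let q, ν : (0,∞)×I → ℂ be measurable with |ν(r,t)| ≤ C₀ for all (r,t). Define Q(r,t) := |q(r,t)|² + (2m/r) Re(ν̄(r,t) q(r,t)) and S(r,t) := −(1/2)Q(r,t) + ∫_r^∞ (1/τ) Q(τ,t) dτ. Then there is a constant C depending only on m and C₀ such that ‖S q‖_{L^{4/3}_t L^{4/3}_x} ≤ C ‖q‖_{L⁴_t L⁴_x} ( ‖q‖²_{L⁴_t L⁴_x} + ‖q/r‖_{L²_t L²_x} ), whenever the right-hand side is finite. -/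
open MeasureTheory Set Real Filter
open scoped ENNReal

noncomputable section

/-- Q(r,t) = |q(r,t)|² + (2m/r) Re( conj(ν) q )(r,t) -/
def Qf (m : ℕ) (q ν : ℝ → ℝ → ℂ) (r t : ℝ) : ℝ :=
  ‖q r t‖ ^ 2 + (2 * (m : ℝ) / r) * ((starRingEnd ℂ) (ν r t) * q r t).re

/-- S(r,t) = -(1/2) Q(r,t) + ∫_r^∞ Q(τ,t)/τ dτ -/
def Sf (m : ℕ) (q ν : ℝ → ℝ → ℂ) (r t : ℝ) : ℝ :=
  -(1 / 2) * Qf m q ν r t + ∫ τ in Ioi r, Qf m q ν τ t / τ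

/-- the mixed norm ‖f‖_{L^a_t L^b_x} over (0,∞) × I, with spatial norms the radial
L^b(ℝ²) norms, valued in ℝ≥0∞ -/
def mixNorm (a b : ℝ) (I : Set ℝ) (f : ℝ → ℝ → ℂ) : ℝ≥0∞ :=
  (∫⁻ t in I, (ENNReal.ofReal (2 * π) *
      ∫⁻ r in Ioi (0:ℝ), ENNReal.ofReal (‖f r t‖ ^ b * r)) ^ (a / b)) ^ (1 / a)

namespace St12

lemma mul_le_sq (a b : ℝ≥0∞) : a * b ≤ a*a + b*b := by
  rcases le_total a b with h|h
  · calc a*b ≤ b*b := mul_le_mul_left h b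
      _ ≤ _ := le_add_self
  · calc a*b ≤ a*a := mul_le_mul_right h a
      _ ≤ _ := le_add_right le_rfl

lemma sq_add_le (a b : ℝ≥0∞) : (a+b)^(2:ℝ) ≤ 3*a^(2:ℝ) + 3*b^(2:ℝ) := by
  have h2 : ∀ x : ℝ≥0∞, x ^ (2:ℝ) = x * x := by
    intro x
    rw [show (2:ℝ) = ((2:ℕ):ℝ) by norm_num, ENNReal.rpow_natCast, sq]
  rw [h2, h2, h2]
  have expand : (a+b)*(a+b) = (a*a + b*b) + (a*b + b*a) := by ring
  rw [expand]
  have h3 : a*b + b*a ≤ (a*a + b*b) + (a*a + b*b) :=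
    add_le_add (mul_le_sq a b) (by rw [mul_comm]; exact mul_le_sq a b)
  calc (a*a + b*b) + (a*b + b*a) ≤ (a*a + b*b) + ((a*a + b*b) + (a*a + b*b)) :=
        add_le_add_right h3 _
    _ = 3*(a*a) + 3*(b*b) := by ring

lemma holder32 {α : Type*} [MeasurableSpace α] (μ : Measure α) {f g : α → ℝ≥0∞}
    (hf : AEMeasurable f μ) (hg : AEMeasurable g μ) :
    ∫⁻ a, f a * g a ∂μ ≤
      (∫⁻ a, f a ^ (3/2:ℝ) ∂μ) ^ (2/3:ℝ) * (∫⁻ a, g a ^ (3:ℝ) ∂μ) ^ (1/3:ℝ) := by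
  have h := ENNReal.lintegral_mul_le_Lp_mul_Lq μ (p := 3/2) (q := 3)
    ⟨by norm_num, by norm_num, by norm_num⟩ hf hg
  simp only [Pi.mul_apply] at h
  convert h using 2 <;> norm_num

end St12

namespace St12

lemma hardy {g : ℝ → ℝ≥0∞} (hg : Measurable g) :
    ∫⁻ r in Ioi (0:ℝ), (∫⁻ τ in Ioi r, g τ * (ENNReal.ofReal τ)⁻¹) ^ (2:ℝ) * ENNReal.ofReal r
      ≤ ∫⁻ τ in Ioi (0:ℝ), g τ ^ (2:ℝ) * ENNReal.ofReal τ := by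
  have step1 : ∀ r : ℝ, r ∈ Ioi (0:ℝ) →
      (∫⁻ τ in Ioi r, g τ * (ENNReal.ofReal τ)⁻¹) ^ (2:ℝ) * ENNReal.ofReal r
        ≤ ∫⁻ τ in Ioi r, g τ ^ (2:ℝ) := by
    intro r hr
    rw [mem_Ioi] at hr
    have hw : ∫⁻ τ in Ioi r, ((ENNReal.ofReal τ)⁻¹) ^ (2:ℝ) = (ENNReal.ofReal r)⁻¹ := by
      have hcongr : ∫⁻ τ in Ioi r, ((ENNReal.ofReal τ)⁻¹) ^ (2:ℝ)
          = ∫⁻ τ in Ioi r, ENNReal.ofReal (τ ^ (-2:ℝ)) := by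
        refine setLIntegral_congr_fun measurableSet_Ioi (fun τ hτ => ?_)
        have hτ0 : 0 < τ := lt_trans hr hτ
        rw [ENNReal.inv_rpow, ENNReal.ofReal_rpow_of_pos hτ0,
          ← ENNReal.ofReal_inv_of_pos (Real.rpow_pos_of_pos hτ0 _),
          ← Real.rpow_neg hτ0.le]
      rw [hcongr, ← ofReal_integral_eq_lintegral_ofReal
          (integrableOn_Ioi_rpow_of_lt (by norm_num) hr)
          ((ae_restrict_iff' measurableSet_Ioi).2 (.of_forall fun τ hτ =>
            Real.rpow_nonneg (le_of_lt (lt_trans hr hτ)) _)),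
        integral_Ioi_rpow_of_lt (by norm_num) hr]
      norm_num
      rw [Real.rpow_neg_one, ENNReal.ofReal_inv_of_pos hr]
    have hcs := ENNReal.lintegral_mul_le_Lp_mul_Lq (volume.restrict (Ioi r)) (p := 2) (q := 2)
      ⟨by norm_num, by norm_num, by norm_num⟩ (f := fun τ => (ENNReal.ofReal τ)⁻¹) (g := g)
      (ENNReal.measurable_ofReal.inv.aemeasurable) hg.aemeasurable
    simp only [Pi.mul_apply] at hcs
    rw [hw] at hcs
    have hcs' : ∫⁻ τ in Ioi r, g τ * (ENNReal.ofReal τ)⁻¹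
        ≤ ((ENNReal.ofReal r)⁻¹) ^ (1/2:ℝ) * (∫⁻ τ in Ioi r, g τ ^ (2:ℝ)) ^ (1/2:ℝ) := by
      simpa only [mul_comm] using hcs
    have hT2 : (∫⁻ τ in Ioi r, g τ * (ENNReal.ofReal τ)⁻¹) ^ (2:ℝ)
        ≤ (ENNReal.ofReal r)⁻¹ * ∫⁻ τ in Ioi r, g τ ^ (2:ℝ) := by
      calc (∫⁻ τ in Ioi r, g τ * (ENNReal.ofReal τ)⁻¹) ^ (2:ℝ)
          ≤ (((ENNReal.ofReal r)⁻¹) ^ (1/2:ℝ)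
              * (∫⁻ τ in Ioi r, g τ ^ (2:ℝ)) ^ (1/2:ℝ)) ^ (2:ℝ) :=
            ENNReal.rpow_le_rpow hcs' (by norm_num)
        _ = (ENNReal.ofReal r)⁻¹ * ∫⁻ τ in Ioi r, g τ ^ (2:ℝ) := by
            rw [ENNReal.mul_rpow_of_nonneg _ _ (by norm_num : (0:ℝ) ≤ 2),
              ← ENNReal.rpow_mul, ← ENNReal.rpow_mul]
            norm_num
    calc (∫⁻ τ in Ioi r, g τ * (ENNReal.ofReal τ)⁻¹) ^ (2:ℝ) * ENNReal.ofReal r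
        ≤ ((ENNReal.ofReal r)⁻¹ * ∫⁻ τ in Ioi r, g τ ^ (2:ℝ)) * ENNReal.ofReal r :=
          mul_le_mul_left hT2 _
      _ = (∫⁻ τ in Ioi r, g τ ^ (2:ℝ)) * ((ENNReal.ofReal r)⁻¹ * ENNReal.ofReal r) := by ring
      _ = ∫⁻ τ in Ioi r, g τ ^ (2:ℝ) := by
          rw [ENNReal.inv_mul_cancel (by simpa using hr) ENNReal.ofReal_ne_top, mul_one]
  have hfm : Measurable (fun p : ℝ × ℝ => (Ioi p.1).indicator (fun τ => g τ ^ (2:ℝ)) p.2) := by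
    have : (fun p : ℝ × ℝ => (Ioi p.1).indicator (fun τ => g τ ^ (2:ℝ)) p.2)
        = Set.indicator {p : ℝ × ℝ | p.1 < p.2} (fun p => g p.2 ^ (2:ℝ)) := by
      funext p
      simp only [indicator_apply, mem_Ioi, mem_setOf_eq]
    rw [this]
    exact Measurable.indicator
      ((ENNReal.continuous_rpow_const.measurable).comp (hg.comp measurable_snd))
      (measurableSet_lt measurable_fst measurable_snd)
  have step2 : ∫⁻ r in Ioi (0:ℝ), ∫⁻ τ in Ioi r, g τ ^ (2:ℝ)
      = ∫⁻ τ in Ioi (0:ℝ), g τ ^ (2:ℝ) * ENNReal.ofReal τ := by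
    calc ∫⁻ r in Ioi (0:ℝ), ∫⁻ τ in Ioi r, g τ ^ (2:ℝ)
        = ∫⁻ r in Ioi (0:ℝ), ∫⁻ τ, (Ioi r).indicator (fun τ => g τ ^ (2:ℝ)) τ :=
          lintegral_congr fun r => (lintegral_indicator measurableSet_Ioi _).symm
      _ = ∫⁻ τ, ∫⁻ r in Ioi (0:ℝ), (Ioi r).indicator (fun τ => g τ ^ (2:ℝ)) τ :=
          lintegral_lintegral_swap hfm.aemeasurable
      _ = ∫⁻ τ, g τ ^ (2:ℝ) * ENNReal.ofReal τ := by
          refine lintegral_congr fun τ => ?_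
          have hrw : ∀ r : ℝ, (Ioi r).indicator (fun τ => g τ ^ (2:ℝ)) τ
              = (Iio τ).indicator (fun _ => g τ ^ (2:ℝ)) r := by
            intro r; simp only [indicator_apply, mem_Ioi, mem_Iio]
          simp_rw [hrw]
          rw [lintegral_indicator measurableSet_Iio, setLIntegral_const,
            Measure.restrict_apply measurableSet_Iio, Iio_inter_Ioi, Real.volume_Ioo, sub_zero]
      _ = ∫⁻ τ in Ioi (0:ℝ), g τ ^ (2:ℝ) * ENNReal.ofReal τ := by
          rw [← lintegral_indicator measurableSet_Ioi]
          refine lintegral_congr fun τ => ?_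
          rcases le_or_gt τ 0 with h|h
          · simp [indicator_apply, mem_Ioi, not_lt.2 h, ENNReal.ofReal_eq_zero.2 h]
          · simp [indicator_apply, mem_Ioi, h]
  calc ∫⁻ r in Ioi (0:ℝ), (∫⁻ τ in Ioi r, g τ * (ENNReal.ofReal τ)⁻¹) ^ (2:ℝ) * ENNReal.ofReal r
      ≤ ∫⁻ r in Ioi (0:ℝ), ∫⁻ τ in Ioi r, g τ ^ (2:ℝ) :=
        setLIntegral_mono' measurableSet_Ioi step1
    _ = _ := step2

end St12
namespace St12

lemma space_est {K : ℝ} (qt : ℝ → ℂ) (hqt : Measurable qt)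
    (Q S : ℝ → ℝ) (hQm : Measurable Q)
    (hS : ∀ r : ℝ, 0 < r → ENNReal.ofReal |S r| ≤ ENNReal.ofReal |Q r|
        + ∫⁻ τ in Ioi r, ENNReal.ofReal |Q τ| * (ENNReal.ofReal τ)⁻¹)
    (hQb : ∀ r : ℝ, 0 < r → (ENNReal.ofReal |Q r|) ^ (2:ℝ) * ENNReal.ofReal r
        ≤ ENNReal.ofReal K * (ENNReal.ofReal (‖qt r‖ ^ (4:ℝ) * r)
            + ENNReal.ofReal (‖qt r / (r:ℂ)‖ ^ (2:ℝ) * r))) :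
    ∫⁻ r in Ioi (0:ℝ), ENNReal.ofReal (‖(S r : ℂ) * qt r‖ ^ (4/3:ℝ) * r)
      ≤ (ENNReal.ofReal (6*K)) ^ (2/3:ℝ) *
        (((∫⁻ r in Ioi (0:ℝ), ENNReal.ofReal (‖qt r‖ ^ (4:ℝ) * r))
          + ∫⁻ r in Ioi (0:ℝ), ENNReal.ofReal (‖qt r / (r:ℂ)‖ ^ (2:ℝ) * r)) ^ (2/3:ℝ) *
         (∫⁻ r in Ioi (0:ℝ), ENNReal.ofReal (‖qt r‖ ^ (4:ℝ) * r)) ^ (1/3:ℝ)) := by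
  set g : ℝ → ℝ≥0∞ := fun r => ENNReal.ofReal |Q r| with hgdef
  have hgm : Measurable g := by
    have : g = fun r => ENNReal.ofReal ‖Q r‖ := by
      funext r; simp [hgdef, Real.norm_eq_abs]
    rw [this]; exact ENNReal.measurable_ofReal.comp hQm.norm
  set T : ℝ → ℝ≥0∞ := fun r => ∫⁻ τ in Ioi r, g τ * (ENNReal.ofReal τ)⁻¹ with hTdef
  have hTanti : Antitone T := fun a b hab =>
    lintegral_mono' (Measure.restrict_mono (Ioi_subset_Ioi hab) le_rfl) le_rfl
  have hTm : Measurable T := hTanti.measurable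
  set U : ℝ → ℝ≥0∞ := fun r => (g r + T r) ^ (4/3:ℝ) * (ENNReal.ofReal r) ^ (2/3:ℝ) with hUdef
  set Yf : ℝ → ℝ≥0∞ := fun r =>
    (ENNReal.ofReal ‖qt r‖) ^ (4/3:ℝ) * (ENNReal.ofReal r) ^ (1/3:ℝ) with hYdef
  have hUm : Measurable U :=
    ((ENNReal.continuous_rpow_const.measurable).comp (hgm.add hTm)).mul
      ((ENNReal.continuous_rpow_const.measurable).comp ENNReal.measurable_ofReal)
  have hYm : Measurable Yf :=
    ((ENNReal.continuous_rpow_const.measurable).comp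
        (ENNReal.measurable_ofReal.comp hqt.norm)).mul
      ((ENNReal.continuous_rpow_const.measurable).comp ENNReal.measurable_ofReal)
  have hpt : ∀ r ∈ Ioi (0:ℝ),
      ENNReal.ofReal (‖(S r : ℂ) * qt r‖ ^ (4/3:ℝ) * r) ≤ U r * Yf r := by
    intro r hr
    rw [mem_Ioi] at hr
    have hr23 : r ^ (2/3:ℝ) * r ^ (1/3:ℝ) = r := by
      rw [← Real.rpow_add hr]; norm_num
    have hnorm : ‖(S r : ℂ) * qt r‖ = |S r| * ‖qt r‖ := by
      rw [norm_mul, Complex.norm_real, Real.norm_eq_abs]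
    have hsplit : ‖(S r : ℂ) * qt r‖ ^ (4/3:ℝ) * r
        = (|S r| ^ (4/3:ℝ) * r ^ (2/3:ℝ)) * (‖qt r‖ ^ (4/3:ℝ) * r ^ (1/3:ℝ)) := by
      have hre : (|S r| ^ (4/3:ℝ) * r ^ (2/3:ℝ)) * (‖qt r‖ ^ (4/3:ℝ) * r ^ (1/3:ℝ))
          = |S r| ^ (4/3:ℝ) * ‖qt r‖ ^ (4/3:ℝ) * (r ^ (2/3:ℝ) * r ^ (1/3:ℝ)) := by ring
      rw [hnorm, Real.mul_rpow (abs_nonneg _) (norm_nonneg _), hre, hr23]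
    calc ENNReal.ofReal (‖(S r : ℂ) * qt r‖ ^ (4/3:ℝ) * r)
        = ((ENNReal.ofReal |S r|) ^ (4/3:ℝ) * (ENNReal.ofReal r) ^ (2/3:ℝ)) * Yf r := by
          rw [hsplit, ENNReal.ofReal_mul (by positivity),
            ENNReal.ofReal_mul (by positivity), ENNReal.ofReal_mul (by positivity),
            ← ENNReal.ofReal_rpow_of_nonneg (abs_nonneg _) (by norm_num),
            ← ENNReal.ofReal_rpow_of_nonneg hr.le (by norm_num : (0:ℝ) ≤ 2/3),
            ← ENNReal.ofReal_rpow_of_nonneg (norm_nonneg _) (by norm_num),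
            ← ENNReal.ofReal_rpow_of_nonneg hr.le (by norm_num : (0:ℝ) ≤ 1/3)]
      _ ≤ ((g r + T r) ^ (4/3:ℝ) * (ENNReal.ofReal r) ^ (2/3:ℝ)) * Yf r := by
          refine mul_le_mul_left (mul_le_mul_left ?_ _) _
          exact ENNReal.rpow_le_rpow (hS r hr) (by norm_num)
      _ = U r * Yf r := rfl
  have hY3 : ∀ r : ℝ, Yf r ^ (3:ℝ) = ENNReal.ofReal (‖qt r‖ ^ (4:ℝ) * r) := by
    intro r
    rw [hYdef]
    simp only []
    rw [ENNReal.mul_rpow_of_nonneg _ _ (by norm_num : (0:ℝ) ≤ 3),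
      ← ENNReal.rpow_mul, ← ENNReal.rpow_mul,
      ENNReal.ofReal_mul (by positivity),
      ← ENNReal.ofReal_rpow_of_nonneg (norm_nonneg _) (by norm_num : (0:ℝ) ≤ 4)]
    norm_num
  have hU32 : ∀ r : ℝ, U r ^ (3/2:ℝ) = (g r + T r) ^ (2:ℝ) * ENNReal.ofReal r := by
    intro r
    rw [hUdef]
    simp only []
    rw [ENNReal.mul_rpow_of_nonneg _ _ (by norm_num : (0:ℝ) ≤ 3/2),
      ← ENNReal.rpow_mul, ← ENNReal.rpow_mul]
    norm_num
  have hAintm : Measurable fun r : ℝ => ENNReal.ofReal (‖qt r‖ ^ (4:ℝ) * r) :=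
    ENNReal.measurable_ofReal.comp
      ((((Real.continuous_rpow_const (by norm_num)).measurable).comp hqt.norm).mul measurable_id)
  have hEbound : ∫⁻ r in Ioi (0:ℝ), g r ^ (2:ℝ) * ENNReal.ofReal r
      ≤ ENNReal.ofReal K *
        ((∫⁻ r in Ioi (0:ℝ), ENNReal.ofReal (‖qt r‖ ^ (4:ℝ) * r))
          + ∫⁻ r in Ioi (0:ℝ), ENNReal.ofReal (‖qt r / (r:ℂ)‖ ^ (2:ℝ) * r)) := by
    calc ∫⁻ r in Ioi (0:ℝ), g r ^ (2:ℝ) * ENNReal.ofReal r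
        ≤ ∫⁻ r in Ioi (0:ℝ), ENNReal.ofReal K * (ENNReal.ofReal (‖qt r‖ ^ (4:ℝ) * r)
            + ENNReal.ofReal (‖qt r / (r:ℂ)‖ ^ (2:ℝ) * r)) :=
          setLIntegral_mono' measurableSet_Ioi fun r hr => hQb r (mem_Ioi.mp hr)
      _ = _ := by
          rw [lintegral_const_mul' _ _ ENNReal.ofReal_ne_top,
            lintegral_add_left hAintm]
  have hmain2 : ∫⁻ r in Ioi (0:ℝ), U r ^ (3/2:ℝ)
      ≤ ENNReal.ofReal (6*K) *
        ((∫⁻ r in Ioi (0:ℝ), ENNReal.ofReal (‖qt r‖ ^ (4:ℝ) * r))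
          + ∫⁻ r in Ioi (0:ℝ), ENNReal.ofReal (‖qt r / (r:ℂ)‖ ^ (2:ℝ) * r)) := by
    have hgrm : Measurable fun r => 3 * (g r ^ (2:ℝ) * ENNReal.ofReal r) :=
      (((ENNReal.continuous_rpow_const.measurable).comp hgm).mul
        ENNReal.measurable_ofReal).const_mul 3
    calc ∫⁻ r in Ioi (0:ℝ), U r ^ (3/2:ℝ)
        = ∫⁻ r in Ioi (0:ℝ), (g r + T r) ^ (2:ℝ) * ENNReal.ofReal r :=
          lintegral_congr fun r => hU32 r
      _ ≤ ∫⁻ r in Ioi (0:ℝ), (3 * g r ^ (2:ℝ) + 3 * T r ^ (2:ℝ)) * ENNReal.ofReal r :=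
          lintegral_mono fun r => mul_le_mul_left (sq_add_le _ _) _
      _ = ∫⁻ r in Ioi (0:ℝ), (3 * (g r ^ (2:ℝ) * ENNReal.ofReal r)
          + 3 * (T r ^ (2:ℝ) * ENNReal.ofReal r)) :=
          lintegral_congr fun r => by ring
      _ = 3 * (∫⁻ r in Ioi (0:ℝ), g r ^ (2:ℝ) * ENNReal.ofReal r)
          + 3 * ∫⁻ r in Ioi (0:ℝ), T r ^ (2:ℝ) * ENNReal.ofReal r := by
          rw [lintegral_add_left hgrm, lintegral_const_mul' _ _ (by norm_num),
            lintegral_const_mul' _ _ (by norm_num)]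
      _ ≤ 3 * (∫⁻ r in Ioi (0:ℝ), g r ^ (2:ℝ) * ENNReal.ofReal r)
          + 3 * ∫⁻ r in Ioi (0:ℝ), g r ^ (2:ℝ) * ENNReal.ofReal r := by
          exact add_le_add le_rfl (mul_le_mul_right (hardy hgm) 3)
      _ = 6 * ∫⁻ r in Ioi (0:ℝ), g r ^ (2:ℝ) * ENNReal.ofReal r := by ring
      _ ≤ 6 * (ENNReal.ofReal K *
          ((∫⁻ r in Ioi (0:ℝ), ENNReal.ofReal (‖qt r‖ ^ (4:ℝ) * r))
            + ∫⁻ r in Ioi (0:ℝ), ENNReal.ofReal (‖qt r / (r:ℂ)‖ ^ (2:ℝ) * r))) := by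
          gcongr
      _ = _ := by
          rw [ENNReal.ofReal_mul (by norm_num : (0:ℝ) ≤ 6), ← mul_assoc,
            ENNReal.ofReal_ofNat]
  calc ∫⁻ r in Ioi (0:ℝ), ENNReal.ofReal (‖(S r : ℂ) * qt r‖ ^ (4/3:ℝ) * r)
      ≤ ∫⁻ r in Ioi (0:ℝ), U r * Yf r := setLIntegral_mono' measurableSet_Ioi hpt
    _ ≤ (∫⁻ r in Ioi (0:ℝ), U r ^ (3/2:ℝ)) ^ (2/3:ℝ) *
        (∫⁻ r in Ioi (0:ℝ), Yf r ^ (3:ℝ)) ^ (1/3:ℝ) :=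
        holder32 _ hUm.aemeasurable hYm.aemeasurable
    _ = (∫⁻ r in Ioi (0:ℝ), U r ^ (3/2:ℝ)) ^ (2/3:ℝ) *
        (∫⁻ r in Ioi (0:ℝ), ENNReal.ofReal (‖qt r‖ ^ (4:ℝ) * r)) ^ (1/3:ℝ) := by
        rw [lintegral_congr hY3]
    _ ≤ (ENNReal.ofReal (6*K) *
          ((∫⁻ r in Ioi (0:ℝ), ENNReal.ofReal (‖qt r‖ ^ (4:ℝ) * r))
            + ∫⁻ r in Ioi (0:ℝ), ENNReal.ofReal (‖qt r / (r:ℂ)‖ ^ (2:ℝ) * r))) ^ (2/3:ℝ) *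
        (∫⁻ r in Ioi (0:ℝ), ENNReal.ofReal (‖qt r‖ ^ (4:ℝ) * r)) ^ (1/3:ℝ) := by
        exact mul_le_mul_left (ENNReal.rpow_le_rpow hmain2 (by norm_num)) _
    _ = _ := by
        rw [ENNReal.mul_rpow_of_nonneg _ _ (by norm_num : (0:ℝ) ≤ 2/3), mul_assoc]

end St12
namespace St12

lemma time_holder {μ : Measure ℝ} (c : ℝ≥0∞) (hc : c ≠ ⊤) (A B L : ℝ → ℝ≥0∞)
    (hA : Measurable A) (hB : Measurable B)
    (h : ∀ t, L t ≤ c * ((A t + B t) ^ (2/3:ℝ) * (A t) ^ (1/3:ℝ))) :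
    ∫⁻ t, L t ∂μ ≤ c * ((((∫⁻ t, A t ∂μ) + ∫⁻ t, B t ∂μ)) ^ (2/3:ℝ) *
      (∫⁻ t, A t ∂μ) ^ (1/3:ℝ)) := by
  have hcollapse : ∀ x : ℝ≥0∞, ((x ^ (2/3:ℝ)) ^ (3/2:ℝ)) = x := by
    intro x; rw [← ENNReal.rpow_mul]; norm_num
  have hcollapse3 : ∀ x : ℝ≥0∞, ((x ^ (1/3:ℝ)) ^ (3:ℝ)) = x := by
    intro x; rw [← ENNReal.rpow_mul]; norm_num
  calc ∫⁻ t, L t ∂μ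
      ≤ ∫⁻ t, c * ((A t + B t) ^ (2/3:ℝ) * (A t) ^ (1/3:ℝ)) ∂μ := lintegral_mono h
    _ = c * ∫⁻ t, (A t + B t) ^ (2/3:ℝ) * (A t) ^ (1/3:ℝ) ∂μ :=
        lintegral_const_mul' _ _ hc
    _ ≤ c * ((∫⁻ t, ((A t + B t) ^ (2/3:ℝ)) ^ (3/2:ℝ) ∂μ) ^ (2/3:ℝ) *
        (∫⁻ t, ((A t) ^ (1/3:ℝ)) ^ (3:ℝ) ∂μ) ^ (1/3:ℝ)) :=
        mul_le_mul_right
          (holder32 μ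
            ((ENNReal.continuous_rpow_const.measurable).comp (hA.add hB)).aemeasurable
            ((ENNReal.continuous_rpow_const.measurable).comp hA).aemeasurable) c
    _ = c * ((∫⁻ t, (A t + B t) ∂μ) ^ (2/3:ℝ) * (∫⁻ t, A t ∂μ) ^ (1/3:ℝ)) := by
        rw [lintegral_congr fun t => hcollapse (A t + B t),
          lintegral_congr fun t => hcollapse3 (A t)]
    _ = _ := by rw [lintegral_add_left hA]

lemma final_assembly (d c X Y Z : ℝ≥0∞) (hc0 : c ≠ 0) (hct : c ≠ ⊤)
    (hZ : Z ≤ d ^ (2/3:ℝ) * ((X + Y) ^ (2/3:ℝ) * X ^ (1/3:ℝ))) :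
    (c * Z) ^ (3/4:ℝ) ≤ d ^ (1/2:ℝ) * (c * X) ^ (1/4:ℝ) *
      (((c * X) ^ (1/4:ℝ)) ^ (2:ℕ) + (c * Y) ^ (1/2:ℝ)) := by
  have h34 : (0:ℝ) ≤ 3/4 := by norm_num
  have h1 : (c*Z)^(3/4:ℝ) ≤ (c * (d^(2/3:ℝ) * ((X+Y)^(2/3:ℝ) * X^(1/3:ℝ))))^(3/4:ℝ) :=
    ENNReal.rpow_le_rpow (mul_le_mul_right hZ c) h34
  refine h1.trans ?_
  have hsub : (X+Y)^(1/2:ℝ) ≤ X^(1/2:ℝ) + Y^(1/2:ℝ) := by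
    have h := ENNReal.rpow_add_rpow_le (X^(1/2:ℝ)) (Y^(1/2:ℝ)) one_pos
      (by norm_num : (1:ℝ) ≤ 2)
    have e1 : (X^(1/2:ℝ))^(2:ℝ) = X := by rw [← ENNReal.rpow_mul]; norm_num
    have e2 : (Y^(1/2:ℝ))^(2:ℝ) = Y := by rw [← ENNReal.rpow_mul]; norm_num
    rw [e1, e2] at h
    simpa using h
  calc (c * (d^(2/3:ℝ) * ((X+Y)^(2/3:ℝ) * X^(1/3:ℝ))))^(3/4:ℝ)
      = c^(3/4:ℝ) * (d^(1/2:ℝ) * ((X+Y)^(1/2:ℝ) * X^(1/4:ℝ))) := by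
        rw [ENNReal.mul_rpow_of_nonneg _ _ h34, ENNReal.mul_rpow_of_nonneg _ _ h34,
          ENNReal.mul_rpow_of_nonneg _ _ h34, ← ENNReal.rpow_mul, ← ENNReal.rpow_mul,
          ← ENNReal.rpow_mul]
        norm_num
      _ ≤ c^(3/4:ℝ) * (d^(1/2:ℝ) * ((X^(1/2:ℝ) + Y^(1/2:ℝ)) * X^(1/4:ℝ))) := by
        exact mul_le_mul_right (mul_le_mul_right (mul_le_mul_left hsub _) _) _
      _ = d^(1/2:ℝ) * (c^(1/4:ℝ) * X^(1/4:ℝ)) *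
          ((c^(1/2:ℝ) * X^(1/2:ℝ)) + (c^(1/2:ℝ) * Y^(1/2:ℝ))) := by
        rw [show c^(3/4:ℝ) = c^(1/4:ℝ) * c^(1/2:ℝ) from by
          rw [← ENNReal.rpow_add _ _ hc0 hct]; norm_num]
        ring
      _ = d^(1/2:ℝ) * (c * X)^(1/4:ℝ) *
          (((c * X)^(1/4:ℝ))^(2:ℕ) + (c * Y)^(1/2:ℝ)) := by
        rw [← ENNReal.rpow_natCast ((c*X)^(1/4:ℝ)) 2, ← ENNReal.rpow_mul,
          show (1/4:ℝ) * (2:ℕ) = 1/2 from by norm_num,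
          ENNReal.mul_rpow_of_nonneg c X (by norm_num : (0:ℝ) ≤ 1/4),
          ENNReal.mul_rpow_of_nonneg c X (by norm_num : (0:ℝ) ≤ 1/2),
          ENNReal.mul_rpow_of_nonneg c Y (by norm_num : (0:ℝ) ≤ 1/2)]

end St12

open St12 in
set_option maxHeartbeats 2000000 in
/-- **Nonlinear estimate for the nonlocal term.**
‖S q‖_{L^{4/3}_t L^{4/3}_x} ≤ C ‖q‖_{L⁴_tL⁴_x} ( ‖q‖²_{L⁴_tL⁴_x} + ‖q/r‖_{L²_tL²_x} ),
with C depending only on m and the bound C₀ for |ν|. -/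
theorem statement12 (m : ℕ) (hm : 1 ≤ m) (C₀ : ℝ) (hC₀ : 0 < C₀) :
    ∃ C > (0:ℝ), ∀ (I : Set ℝ), I.OrdConnected →
      ∀ (q ν : ℝ → ℝ → ℂ),
      Measurable (Function.uncurry q) →
      Measurable (Function.uncurry ν) →
      (∀ r t : ℝ, ‖ν r t‖ ≤ C₀) →
      mixNorm (4/3) (4/3) I (fun r t => (Sf m q ν r t : ℂ) * q r t)
        ≤ ENNReal.ofReal C * mixNorm 4 4 I q *
            ((mixNorm 4 4 I q) ^ (2:ℕ) + mixNorm 2 2 I (fun r t => q r t / (r : ℂ))) := by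
  classical
  have hKpos : (0:ℝ) < 3 + 12 * (m:ℝ)^2 * C₀^2 := by positivity
  refine ⟨Real.sqrt (6 * (3 + 12 * (m:ℝ)^2 * C₀^2)),
    Real.sqrt_pos.2 (by positivity), ?_⟩
  intro I _ q ν hq hν hνb
  have hq' : Measurable fun p : ℝ × ℝ => q p.1 p.2 := hq
  have hν' : Measurable fun p : ℝ × ℝ => ν p.1 p.2 := hν
  have hqt : ∀ t, Measurable fun r => q r t := fun t =>
    hq'.comp (measurable_id.prodMk measurable_const)
  have hQm : Measurable fun p : ℝ × ℝ => Qf m q ν p.1 p.2 := by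
    have h1 : Measurable fun p : ℝ × ℝ => ‖q p.1 p.2‖ ^ 2 := hq'.norm.pow_const 2
    have h2 : Measurable fun p : ℝ × ℝ => (2 * (m:ℝ) / p.1) :=
      measurable_const.div measurable_fst
    have h3 : Measurable fun p : ℝ × ℝ => ((starRingEnd ℂ) (ν p.1 p.2) * q p.1 p.2).re :=
      Complex.measurable_re.comp ((continuous_star.measurable.comp hν').mul hq')
    exact h1.add (h2.mul h3)
  have hQt : ∀ t, Measurable fun r => Qf m q ν r t := by
    intro t
    have h := hQm.comp (f := fun r : ℝ => (r, t)) (measurable_id.prodMk measurable_const)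
    exact h
  -- pointwise bound on S
  have hS : ∀ t r, 0 < r → ENNReal.ofReal |Sf m q ν r t|
      ≤ ENNReal.ofReal |Qf m q ν r t|
        + ∫⁻ τ in Ioi r, ENNReal.ofReal |Qf m q ν τ t| * (ENNReal.ofReal τ)⁻¹ := by
    intro t r hr
    have habs : |Sf m q ν r t| ≤ |Qf m q ν r t| + |∫ τ in Ioi r, Qf m q ν τ t / τ| := by
      rw [Sf]
      refine (abs_add_le _ _).trans (add_le_add_left ?_ _)
      rw [abs_mul, show |(-(1/2):ℝ)| = 1/2 by norm_num]
      nlinarith [abs_nonneg (Qf m q ν r t)]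
    refine (ENNReal.ofReal_le_ofReal habs).trans
      (ENNReal.ofReal_add_le.trans (add_le_add_right ?_ _))
    calc ENNReal.ofReal |∫ τ in Ioi r, Qf m q ν τ t / τ|
        = ‖∫ τ in Ioi r, Qf m q ν τ t / τ‖ₑ := (Real.enorm_eq_ofReal_abs _).symm
      _ ≤ ∫⁻ τ in Ioi r, ‖Qf m q ν τ t / τ‖ₑ := enorm_integral_le_lintegral_enorm _
      _ = ∫⁻ τ in Ioi r, ENNReal.ofReal |Qf m q ν τ t| * (ENNReal.ofReal τ)⁻¹ := by
          refine setLIntegral_congr_fun measurableSet_Ioi (fun τ hτ => ?_)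
          have hτ0 : 0 < τ := lt_trans hr hτ
          rw [Real.enorm_eq_ofReal_abs, abs_div, abs_of_pos hτ0,
            ENNReal.ofReal_div_of_pos hτ0, div_eq_mul_inv]
  -- pointwise bound on Q
  have hQb : ∀ t r, 0 < r → (ENNReal.ofReal |Qf m q ν r t|) ^ (2:ℝ) * ENNReal.ofReal r
      ≤ ENNReal.ofReal (3 + 12 * (m:ℝ)^2 * C₀^2) * (ENNReal.ofReal (‖q r t‖ ^ (4:ℝ) * r)
          + ENNReal.ofReal (‖q r t / (r:ℂ)‖ ^ (2:ℝ) * r)) := by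
    intro t r hr
    have h4 : ‖q r t‖ ^ (4:ℝ) = ‖q r t‖ ^ (4:ℕ) := by
      rw [show (4:ℝ) = ((4:ℕ):ℝ) by norm_num, Real.rpow_natCast]
    have h2 : ‖q r t / (r:ℂ)‖ ^ (2:ℝ) = ‖q r t / (r:ℂ)‖ ^ (2:ℕ) := by
      rw [show (2:ℝ) = ((2:ℕ):ℝ) by norm_num, Real.rpow_natCast]
    have hnd : ‖q r t / (r:ℂ)‖ = ‖q r t‖ / r := by
      rw [norm_div, Complex.norm_real, Real.norm_eq_abs, abs_of_pos hr]
    have habsQ : |Qf m q ν r t| ≤ ‖q r t‖^2 + 2*(m:ℝ)*C₀*(‖q r t‖/r) := by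
      rw [Qf]
      refine (abs_add_le _ _).trans ?_
      have h1 : |‖q r t‖ ^ 2| = ‖q r t‖^2 := abs_of_nonneg (by positivity)
      have hre : |((starRingEnd ℂ) (ν r t) * q r t).re| ≤ C₀ * ‖q r t‖ := by
        refine (Complex.abs_re_le_norm _).trans ?_
        rw [norm_mul, starRingEnd_apply, norm_star]
        exact mul_le_mul_of_nonneg_right (hνb r t) (norm_nonneg _)
      have h2' : |2*(m:ℝ)/r * ((starRingEnd ℂ) (ν r t) * q r t).re|
          ≤ 2*(m:ℝ)*C₀*(‖q r t‖/r) := by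
        rw [abs_mul, abs_of_nonneg (by positivity : (0:ℝ) ≤ 2*(m:ℝ)/r)]
        calc 2*(m:ℝ)/r * |((starRingEnd ℂ) (ν r t) * q r t).re|
            ≤ 2*(m:ℝ)/r * (C₀ * ‖q r t‖) :=
              mul_le_mul_of_nonneg_left hre (by positivity)
          _ = 2*(m:ℝ)*C₀*(‖q r t‖/r) := by field_simp
      rw [h1]
      exact add_le_add le_rfl h2'
    have hofr : (ENNReal.ofReal |Qf m q ν r t|) ^ (2:ℝ) * ENNReal.ofReal r
        = ENNReal.ofReal (|Qf m q ν r t|^2 * r) := by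
      rw [ENNReal.ofReal_rpow_of_nonneg (abs_nonneg _) (by norm_num : (0:ℝ) ≤ 2),
        show (2:ℝ) = ((2:ℕ):ℝ) by norm_num, Real.rpow_natCast,
        ← ENNReal.ofReal_mul (by positivity)]
    have hreal : |Qf m q ν r t|^2 * r
        ≤ (3 + 12 * (m:ℝ)^2 * C₀^2) * (‖q r t‖ ^ (4:ℝ) * r + ‖q r t / (r:ℂ)‖ ^ (2:ℝ) * r) := by
      rw [h4, h2, hnd]
      have hq0 : (0:ℝ) ≤ ‖q r t‖ := norm_nonneg _
      have hQ0 : (0:ℝ) ≤ |Qf m q ν r t| := abs_nonneg _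
      have hv0 : (0:ℝ) ≤ ‖q r t‖ / r := by positivity
      have hQa2 : |Qf m q ν r t|^2
          ≤ (3 + 12 * (m:ℝ)^2 * C₀^2) * (‖q r t‖^4 + (‖q r t‖/r)^2) := by
        nlinarith [mul_self_le_mul_self hQ0 habsQ,
          sq_nonneg (‖q r t‖^2 - 2*(m:ℝ)*C₀*(‖q r t‖/r)),
          mul_nonneg (sq_nonneg ((m:ℝ)*C₀)) (sq_nonneg (‖q r t‖^2)),
          mul_nonneg (sq_nonneg ((m:ℝ)*C₀)) (sq_nonneg (‖q r t‖/r)),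
          sq_nonneg (‖q r t‖^2), sq_nonneg (‖q r t‖/r)]
      calc |Qf m q ν r t|^2 * r
          ≤ ((3 + 12 * (m:ℝ)^2 * C₀^2) * (‖q r t‖^4 + (‖q r t‖/r)^2)) * r :=
            mul_le_mul_of_nonneg_right hQa2 hr.le
        _ = (3 + 12 * (m:ℝ)^2 * C₀^2) * (‖q r t‖^4 * r + (‖q r t‖/r)^2 * r) := by ring
    calc (ENNReal.ofReal |Qf m q ν r t|) ^ (2:ℝ) * ENNReal.ofReal r
        = ENNReal.ofReal (|Qf m q ν r t|^2 * r) := hofr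
      _ ≤ ENNReal.ofReal ((3 + 12 * (m:ℝ)^2 * C₀^2) *
            (‖q r t‖ ^ (4:ℝ) * r + ‖q r t / (r:ℂ)‖ ^ (2:ℝ) * r)) :=
          ENNReal.ofReal_le_ofReal hreal
      _ = _ := by
          rw [ENNReal.ofReal_mul hKpos.le,
            ENNReal.ofReal_add (mul_nonneg (Real.rpow_nonneg (norm_nonneg _) _) hr.le)
              (mul_nonneg (Real.rpow_nonneg (norm_nonneg _) _) hr.le)]
  -- the spatial estimate, for each t
  have key : ∀ t, (∫⁻ r in Ioi (0:ℝ),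
        ENNReal.ofReal (‖(Sf m q ν r t : ℂ) * q r t‖ ^ (4/3:ℝ) * r))
      ≤ (ENNReal.ofReal (6*(3 + 12 * (m:ℝ)^2 * C₀^2))) ^ (2/3:ℝ) *
        ((((∫⁻ r in Ioi (0:ℝ), ENNReal.ofReal (‖q r t‖ ^ (4:ℝ) * r))
            + ∫⁻ r in Ioi (0:ℝ), ENNReal.ofReal (‖q r t / (r:ℂ)‖ ^ (2:ℝ) * r)) ^ (2/3:ℝ)) *
          (∫⁻ r in Ioi (0:ℝ), ENNReal.ofReal (‖q r t‖ ^ (4:ℝ) * r)) ^ (1/3:ℝ)) :=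
    fun t => space_est (fun r => q r t) (hqt t) (fun r => Qf m q ν r t)
      (fun r => Sf m q ν r t) (hQt t) (hS t) (hQb t)
  -- measurability in t
  have hAm : Measurable fun t => ∫⁻ r in Ioi (0:ℝ), ENNReal.ofReal (‖q r t‖ ^ (4:ℝ) * r) := by
    have h1 : Measurable fun p : ℝ × ℝ =>
        (Ioi (0:ℝ)).indicator (fun r => ENNReal.ofReal (‖q r p.1‖ ^ (4:ℝ) * r)) p.2 := by
      have heq : (fun p : ℝ × ℝ =>
          (Ioi (0:ℝ)).indicator (fun r => ENNReal.ofReal (‖q r p.1‖ ^ (4:ℝ) * r)) p.2)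
          = Set.indicator {p : ℝ × ℝ | 0 < p.2}
              (fun p => ENNReal.ofReal (‖q p.2 p.1‖ ^ (4:ℝ) * p.2)) := by
        funext p; simp only [indicator_apply, mem_Ioi, mem_setOf_eq]
      rw [heq]
      refine Measurable.indicator ?_ (measurableSet_lt measurable_const measurable_snd)
      exact ENNReal.measurable_ofReal.comp
        ((((Real.continuous_rpow_const (by norm_num)).measurable).comp
            (hq'.comp measurable_swap).norm).mul measurable_snd)
    have h2 := Measurable.lintegral_prod_right' (ν := volume) h1
    simpa only [lintegral_indicator measurableSet_Ioi] using h2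
  have hBm : Measurable fun t =>
      ∫⁻ r in Ioi (0:ℝ), ENNReal.ofReal (‖q r t / (r:ℂ)‖ ^ (2:ℝ) * r) := by
    have h1 : Measurable fun p : ℝ × ℝ =>
        (Ioi (0:ℝ)).indicator (fun r => ENNReal.ofReal (‖q r p.1 / (r:ℂ)‖ ^ (2:ℝ) * r)) p.2 := by
      have heq : (fun p : ℝ × ℝ =>
          (Ioi (0:ℝ)).indicator (fun r => ENNReal.ofReal (‖q r p.1 / (r:ℂ)‖ ^ (2:ℝ) * r)) p.2)
          = Set.indicator {p : ℝ × ℝ | 0 < p.2}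
              (fun p => ENNReal.ofReal (‖q p.2 p.1 / (p.2:ℂ)‖ ^ (2:ℝ) * p.2)) := by
        funext p; simp only [indicator_apply, mem_Ioi, mem_setOf_eq]
      rw [heq]
      refine Measurable.indicator ?_ (measurableSet_lt measurable_const measurable_snd)
      refine ENNReal.measurable_ofReal.comp
        ((((Real.continuous_rpow_const (by norm_num)).measurable).comp ?_).mul measurable_snd)
      exact ((hq'.comp measurable_swap).div
        (Complex.measurable_ofReal.comp measurable_snd)).norm
    have h2 := Measurable.lintegral_prod_right' (ν := volume) h1
    simpa only [lintegral_indicator measurableSet_Ioi] using h2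
  -- time integration
  have ht := time_holder (μ := volume.restrict I)
    ((ENNReal.ofReal (6*(3 + 12 * (m:ℝ)^2 * C₀^2))) ^ (2/3:ℝ))
    (ENNReal.rpow_ne_top_of_nonneg (by norm_num) ENNReal.ofReal_ne_top)
    _ _ _ hAm hBm key
  -- unfold the mixed norms
  have hmix1 : mixNorm (4/3) (4/3) I (fun r t => (Sf m q ν r t : ℂ) * q r t)
      = (ENNReal.ofReal (2*π) * ∫⁻ t in I, (∫⁻ r in Ioi (0:ℝ),
          ENNReal.ofReal (‖(Sf m q ν r t : ℂ) * q r t‖ ^ (4/3:ℝ) * r))) ^ (3/4:ℝ) := by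
    rw [mixNorm, show ((4:ℝ)/3) / ((4:ℝ)/3) = 1 by norm_num,
      show (1:ℝ)/(4/3) = 3/4 by norm_num]
    simp only [ENNReal.rpow_one]
    rw [lintegral_const_mul' _ _ ENNReal.ofReal_ne_top]
  have hmix2 : mixNorm 4 4 I q
      = (ENNReal.ofReal (2*π) * ∫⁻ t in I, (∫⁻ r in Ioi (0:ℝ),
          ENNReal.ofReal (‖q r t‖ ^ (4:ℝ) * r))) ^ (1/4:ℝ) := by
    rw [mixNorm, show (4:ℝ)/4 = 1 by norm_num]
    simp only [ENNReal.rpow_one]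
    rw [lintegral_const_mul' _ _ ENNReal.ofReal_ne_top]
  have hmix3 : mixNorm 2 2 I (fun r t => q r t / (r:ℂ))
      = (ENNReal.ofReal (2*π) * ∫⁻ t in I, (∫⁻ r in Ioi (0:ℝ),
          ENNReal.ofReal (‖q r t / (r:ℂ)‖ ^ (2:ℝ) * r))) ^ (1/2:ℝ) := by
    rw [mixNorm, show (2:ℝ)/2 = 1 by norm_num]
    simp only [ENNReal.rpow_one]
    rw [lintegral_const_mul' _ _ ENNReal.ofReal_ne_top]
  rw [hmix1, hmix2, hmix3,
    show ENNReal.ofReal (Real.sqrt (6*(3 + 12 * (m:ℝ)^2 * C₀^2)))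
      = (ENNReal.ofReal (6*(3 + 12 * (m:ℝ)^2 * C₀^2))) ^ (1/2:ℝ) from by
        rw [Real.sqrt_eq_rpow, ← ENNReal.ofReal_rpow_of_nonneg (by positivity) (by norm_num)]]
  exact final_assembly _ _ _ _ _
    (by simpa using (ENNReal.ofReal_pos.2 (by positivity : (0:ℝ) < 2*π)).ne')
    ENNReal.ofReal_ne_top ht

end
end

section
/- Let m ≥ 1 be an integer and h₃(ρ) = (ρ^m−ρ^{−m})/(ρ^m+ρ^{−m}). Then for all r > 0 and s > 0, |h₃(r/s) − h₃(r)| ≤ m |s − 1| / min(1,s). -/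
open MeasureTheory Set Real Filter
open scoped ENNReal

noncomputable section

lemma tanh_lip (a b : ℝ) : |Real.tanh a - Real.tanh b| ≤ |a - b| := by
  have hd : ∀ x : ℝ, HasDerivAt Real.tanh (1 / Real.cosh x ^ 2) x := by
    intro x
    have h := (Real.hasDerivAt_sinh x).div (Real.hasDerivAt_cosh x) (Real.cosh_pos x).ne'
    have : Real.tanh = fun y => Real.sinh y / Real.cosh y := funext Real.tanh_eq_sinh_div_cosh
    rw [this]
    exact h.congr_deriv (by rw [← Real.cosh_sq_sub_sinh_sq x]; ring)
  have := Convex.norm_image_sub_le_of_norm_hasDerivWithin_le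
    (f := Real.tanh) (f' := fun x => 1 / Real.cosh x ^ 2) (C := 1) (s := Set.univ)
    (fun x _ => (hd x).hasDerivWithinAt)
    (fun x _ => by
      rw [Real.norm_eq_abs, abs_of_pos (by positivity)]
      rw [div_le_one (by positivity)]
      nlinarith [Real.one_le_cosh x])
    convex_univ (Set.mem_univ b) (Set.mem_univ a)
  simpa using this

lemma h3_tanh (m : ℕ) (x : ℝ) (hx : 0 < x) : h3f m x = Real.tanh ((m : ℝ) * Real.log x) := by
  have h1 : x ^ (m : ℤ) = Real.exp ((m : ℝ) * Real.log x) := by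
    rw [← Real.rpow_intCast x (m : ℤ), Real.rpow_def_of_pos hx]
    norm_num [mul_comm]
  have h2 : x ^ (-(m : ℤ)) = Real.exp (-((m : ℝ) * Real.log x)) := by
    rw [← Real.rpow_intCast x (-(m : ℤ)), Real.rpow_def_of_pos hx]
    push_cast
    ring_nf
  rw [h3f, h1, h2, Real.tanh_eq_sinh_div_cosh, Real.sinh_eq, Real.cosh_eq]
  have hb : Real.exp ((m : ℝ) * Real.log x) + Real.exp (-((m : ℝ) * Real.log x)) ≠ 0 := by
    positivity
  field_simp

lemma log_bound (s : ℝ) (hs : 0 < s) : |Real.log s| ≤ |s - 1| / min 1 s := by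
  rcases le_or_gt 1 s with h | h
  · rw [min_eq_left (by linarith), div_one, abs_of_nonneg (Real.log_nonneg h),
      abs_of_nonneg (by linarith)]
    linarith [Real.log_le_sub_one_of_pos hs]
  · rw [min_eq_right (by linarith), abs_of_nonpos (Real.log_nonpos hs.le h.le),
      abs_of_nonpos (by linarith)]
    have h1 : Real.log s⁻¹ ≤ s⁻¹ - 1 := Real.log_le_sub_one_of_pos (by positivity)
    rw [Real.log_inv] at h1
    rw [le_div_iff₀ hs]
    have : s⁻¹ * s = 1 := inv_mul_cancel₀ hs.ne'
    nlinarith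


/-- **Scaling estimate for h₃.** For every integer m ≥ 1 and all r, s > 0,
|h₃(r/s) − h₃(r)| ≤ m |s − 1| / min(1,s). -/
theorem statement13 (m : ℕ) (hm : 1 ≤ m) (r s : ℝ) (hr : 0 < r) (hs : 0 < s) :
    |h3f m (r / s) - h3f m r| ≤ (m : ℝ) * |s - 1| / min 1 s := by
  rw [h3_tanh m _ (by positivity), h3_tanh m r hr]
  calc |Real.tanh ((m:ℝ) * Real.log (r/s)) - Real.tanh ((m:ℝ) * Real.log r)|
      ≤ |(m:ℝ) * Real.log (r/s) - (m:ℝ) * Real.log r| := tanh_lip _ _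
    _ = (m:ℝ) * |Real.log s| := by
        rw [Real.log_div hr.ne' hs.ne', ← mul_sub, abs_mul, Nat.abs_cast]
        ring_nf
        rw [abs_neg]
    _ ≤ (m:ℝ) * (|s - 1| / min 1 s) := by
        exact mul_le_mul_of_nonneg_left (log_bound s hs) (Nat.cast_nonneg m)
    _ = (m:ℝ) * |s - 1| / min 1 s := by ring


end
end

section
/- Let m ≥ 2 be an integer and define V(r) := (m/r²)(m − 2h₃(r)) for r > 0, where h₃(r) = (r^m−r^{−m})/(r^m+r^{−m}). Then for all r > 0: (m+1)² ≥ 1 + r²V(r) ≥ (m−1)² ≥ 1, and 1 − r²·(d/dr)(rV(r)) = 1 + m(m − 2h₃(r) + 2m h₁(r)²) ≥ 1 + m(m−2) ≥ 1, where h₁(r) = 2/(r^m+r^{−m}). In particular the potential (1 + m² − 2m h₃(r))/r² = 1/r² + V(r) from the linearized Schrödinger map problem satisfies the positivity and repulsivity conditions with ν = 1. -/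
open MeasureTheory Set Real Filter
open scoped ENNReal

noncomputable section

/-- **The linearized potential is positive and repulsive.** For m ≥ 2 and
V(r) := (m/r²)(m − 2h₃(r)): (m+1)² ≥ 1 + r²V(r) ≥ (m−1)² ≥ 1 (in particular
0 ≤ r²V(r)), and 1 − r²(rV(r))′ = 1 + m(m − 2h₃ + 2m h₁²) ≥ 1 + m(m−2) ≥ 1,
so the potential (1 + m² − 2m h₃(r))/r² = 1/r² + V(r) satisfies the positivity
and repulsivity conditions with ν = 1. -/
theorem statement15 (m : ℕ) (hm : 2 ≤ m) (r : ℝ) (hr : 0 < r) :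
    (((m : ℝ) + 1) ^ 2 ≥ 1 + r ^ 2 * (((m : ℝ) / r ^ 2) * ((m : ℝ) - 2 * h3f m r)) ∧
     1 + r ^ 2 * (((m : ℝ) / r ^ 2) * ((m : ℝ) - 2 * h3f m r)) ≥ ((m : ℝ) - 1) ^ 2 ∧
     ((m : ℝ) - 1) ^ 2 ≥ 1 ∧
     0 ≤ r ^ 2 * (((m : ℝ) / r ^ 2) * ((m : ℝ) - 2 * h3f m r))) ∧
    (1 - r ^ 2 * deriv (fun ρ => ρ * (((m : ℝ) / ρ ^ 2) * ((m : ℝ) - 2 * h3f m ρ))) r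
        = 1 + (m : ℝ) * ((m : ℝ) - 2 * h3f m r + 2 * (m : ℝ) * (h1f m r) ^ 2) ∧
     1 + (m : ℝ) * ((m : ℝ) - 2 * h3f m r + 2 * (m : ℝ) * (h1f m r) ^ 2)
        ≥ 1 + (m : ℝ) * ((m : ℝ) - 2) ∧
     1 + (m : ℝ) * ((m : ℝ) - 2) ≥ 1) := by
  have hrne : r ≠ 0 := hr.ne'
  have hM : (2:ℝ) ≤ (m:ℝ) := by exact_mod_cast hm
  have ha : (0:ℝ) < r ^ (m:ℤ) := zpow_pos hr _
  have hai : (0:ℝ) < r ^ (-(m:ℤ)) := zpow_pos hr _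
  have hD : (0:ℝ) < r ^ (m:ℤ) + r ^ (-(m:ℤ)) := by positivity
  have h3le : h3f m r ≤ 1 := by
    rw [h3f, div_le_one hD]; linarith
  have h3ge : (-1:ℝ) ≤ h3f m r := by
    rw [h3f, le_div_iff₀ hD]; linarith
  have hr2 : (r:ℝ) ^ 2 ≠ 0 := pow_ne_zero _ hrne
  have key : r ^ 2 * (((m : ℝ) / r ^ 2) * ((m : ℝ) - 2 * h3f m r))
      = (m : ℝ) * ((m : ℝ) - 2 * h3f m r) := by
    field_simp
  refine ⟨⟨?_, ?_, ?_, ?_⟩, ?_, ?_, ?_⟩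
  · rw [key]; nlinarith
  · rw [key]; nlinarith
  · nlinarith
  · rw [key]; nlinarith
  · -- the derivative computation
    have hu := hasDerivAt_zpow (m:ℤ) r (Or.inl hrne)
    have hv := hasDerivAt_zpow (-(m:ℤ)) r (Or.inl hrne)
    have hh3 : HasDerivAt (fun ρ => h3f m ρ)
        (((((m:ℤ):ℝ) * r ^ ((m:ℤ) - 1) - ((-(m:ℤ)):ℤ) * r ^ (-(m:ℤ) - 1)) *
            (r ^ (m:ℤ) + r ^ (-(m:ℤ))) -
          (r ^ (m:ℤ) - r ^ (-(m:ℤ))) *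
            (((m:ℤ):ℝ) * r ^ ((m:ℤ) - 1) + ((-(m:ℤ)):ℤ) * r ^ (-(m:ℤ) - 1))) /
          (r ^ (m:ℤ) + r ^ (-(m:ℤ))) ^ 2) r := by
      simpa [h3f, Pi.div_def, Pi.sub_def, Pi.add_def] using (hu.sub hv).div (hu.add hv) hD.ne'
    have hq : HasDerivAt (fun ρ : ℝ => (m:ℝ) / ρ ^ 2)
        ((0 * r ^ 2 - (m:ℝ) * (↑2 * r ^ (2 - 1))) / (r ^ 2) ^ 2) r :=
      (hasDerivAt_const r (m:ℝ)).div (hasDerivAt_pow 2 r) hr2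
    have hF := (hasDerivAt_id r).mul (hq.mul ((hasDerivAt_const r (m:ℝ)).sub (hh3.const_mul 2)))
    simp only [id_eq, Pi.mul_def, Pi.sub_def] at hF
    rw [hF.deriv]
    have e1 : r ^ ((m:ℤ) - 1) = r ^ (m:ℤ) / r := by
      rw [zpow_sub₀ hrne, zpow_one]
    have e2 : r ^ (-(m:ℤ) - 1) = (r ^ (m:ℤ))⁻¹ / r := by
      rw [zpow_sub₀ hrne, zpow_one, zpow_neg]
    have e3 : r ^ (-(m:ℤ)) = (r ^ (m:ℤ))⁻¹ := zpow_neg r (m:ℤ)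
    rw [h1f, h3f]
    rw [e1, e2, e3]
    have haI : (0:ℝ) < (r ^ (m:ℤ))⁻¹ := by positivity
    have hD' : r ^ (m:ℤ) + (r ^ (m:ℤ))⁻¹ ≠ 0 := by positivity
    have hane : r ^ (m:ℤ) ≠ 0 := ha.ne'
    push_cast
    field_simp
    ring
  · have f1 : (0:ℝ) ≤ (m:ℝ) * (1 - h3f m r) := mul_nonneg (by linarith) (by linarith)
    have f2 : (0:ℝ) ≤ (m:ℝ) ^ 2 * (h1f m r) ^ 2 := by positivity
    nlinarith [f1, f2]
  · nlinarith

end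
end
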